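/- arXiv:2307.12768 — 12 statements merged into one kernel-verified Lean document; each statement's English description precedes it below -/
import Mathlib

section
/- Let N ≥ 1 and let z_0, …, z_N, p_1, …, p_N be complex numbers that are pairwise distinct (the z's pairwise distinct, the p's pairwise distinct, and no z equals a p). Then det A = (∑_{α=0}^{N} z_α − ∑_{j=1}^{N} p_j) · det B, where A and B are the bordered Cauchy matrices defined in the context. -/
open scoped BigOperators
open Polynomial Finset

private lemma bc_key (N : ℕ) (hN : 1 ≤ N)
    (z : Fin (N + 1) → ℂ) (p : Fin N → ℂ)
    (hz : Function.Injective z) (hp : Function.Injective p)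
    (hzp : ∀ k j, z k ≠ p j) (k : Fin (N + 1)) :
    (z k - ((∑ m, z m) - ∑ j, p j))
      + ∑ j, ((∏ m, (p j - z m)) * ∏ j' ∈ Finset.univ.erase j, (p j - p j')⁻¹)
          * (z k - p j)⁻¹ = 0 := by
  classical
  set S : ℂ := (∑ m, z m) - ∑ j, p j with hS
  set g : ℂ[X] := ∏ m, (X - C (z m)) with hg
  set q : ℂ[X] := ∏ j, (X - C (p j)) with hq
  set f : ℂ[X] := g - (X - C S) * q with hf
  have hgm : g.Monic := monic_prod_of_monic _ _ fun i _ => monic_X_sub_C _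
  have hqm : q.Monic := monic_prod_of_monic _ _ fun i _ => monic_X_sub_C _
  have hhm : ((X - C S) * q).Monic := (monic_X_sub_C S).mul hqm
  have hgd : g.natDegree = N + 1 := by
    rw [hg, natDegree_prod_of_monic _ _ fun i _ => monic_X_sub_C _]
    simp
  have hqd : q.natDegree = N := by
    rw [hq, natDegree_prod_of_monic _ _ fun i _ => monic_X_sub_C _]
    simp
  have hhd : ((X - C S) * q).natDegree = N + 1 := by
    rw [(monic_X_sub_C S).natDegree_mul hqm, natDegree_X_sub_C, hqd, Nat.add_comm]
  have hcg : g.coeff N = -∑ m, z m := by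
    have := prod_X_sub_C_coeff_card_pred (Finset.univ : Finset (Fin (N + 1))) z (by simp)
    simpa using this
  have hch : ((X - C S) * q).coeff N = -S + -∑ j, p j := by
    have h1 : ((X - C S) * q).nextCoeff = -S + -∑ j, p j := by
      rw [Monic.nextCoeff_mul (monic_X_sub_C S) hqm, nextCoeff_X_sub_C, hq,
        prod_X_sub_C_nextCoeff]
    have h2 := nextCoeff_of_natDegree_pos (p := (X - C S) * q) (by rw [hhd]; omega)
    rw [hhd] at h2
    rw [← h1, h2]
    norm_num
  have hdeg : f.degree < (N : WithBot ℕ) := by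
    rw [show ((N : ℕ) : WithBot ℕ) = ((N : ℕ) : WithBot ℕ) from rfl,
      Polynomial.degree_lt_iff_coeff_zero]
    intro m hm
    have hm' : N ≤ m := by exact_mod_cast hm
    rw [hf, coeff_sub]
    rcases eq_or_lt_of_le hm' with hmm | hmm
    · rw [← hmm, hcg, hch, hS]; ring
    · rcases eq_or_lt_of_le (Nat.succ_le_of_lt hmm) with hmm2 | hmm2
      · subst hmm2
        simp only [Nat.succ_eq_add_one]
        rw [show N + 1 = g.natDegree from hgd.symm, hgm.coeff_natDegree]
        rw [show g.natDegree = ((X - C S) * q).natDegree by rw [hgd, hhd],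
          hhm.coeff_natDegree, sub_self]
      · rw [coeff_eq_zero_of_natDegree_lt (by omega : g.natDegree < m),
          coeff_eq_zero_of_natDegree_lt (by omega : ((X - C S) * q).natDegree < m), sub_self]
  have hcard : f.degree < ((Finset.univ : Finset (Fin N)).card : WithBot ℕ) := by
    simpa using hdeg
  have hinterp := Lagrange.eq_interpolate (s := (Finset.univ : Finset (Fin N))) (v := p)
    hp.injOn hcard
  have heval := congrArg (Polynomial.eval (z k)) hinterp
  set Q : ℂ := ∏ j, (z k - p j) with hQdef
  have hzkp : ∀ j, z k - p j ≠ 0 := fun j => sub_ne_zero.mpr (hzp k j)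
  have hQ0 : Q ≠ 0 := Finset.prod_ne_zero_iff.mpr fun j _ => hzkp j
  have hgz : g.eval (z k) = 0 := by
    rw [hg, eval_prod]
    exact Finset.prod_eq_zero (Finset.mem_univ k) (by simp)
  have hQ : q.eval (z k) = Q := by rw [hq, eval_prod]; simp [hQdef]
  have hfp : ∀ j, f.eval (p j) = ∏ m, (p j - z m) := by
    intro j
    have h0 : eval (p j) q = 0 := by
      rw [hq, eval_prod]
      exact Finset.prod_eq_zero (Finset.mem_univ j) (by simp)
    rw [hf, eval_sub, eval_mul, h0, mul_zero, sub_zero, hg, eval_prod]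
    simp
  have hbasis : ∀ j : Fin N, eval (z k) (Lagrange.basis Finset.univ p j)
      = ∏ j' ∈ Finset.univ.erase j, ((p j - p j')⁻¹ * (z k - p j')) := by
    intro j
    rw [Lagrange.basis, eval_prod]
    refine Finset.prod_congr rfl fun j' _ => ?_
    simp [Lagrange.basisDivisor]
  have hE : -((z k - S) * Q) = ∑ j, (∏ m, (p j - z m))
      * ∏ j' ∈ Finset.univ.erase j, ((p j - p j')⁻¹ * (z k - p j')) := by
    have h1 : f.eval (z k) = -((z k - S) * Q) := by
      rw [hf, eval_sub, hgz, eval_mul, hQ, eval_sub, eval_X, eval_C, zero_sub]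
    rw [← h1, heval, Lagrange.interpolate_apply, eval_finset_sum]
    refine Finset.sum_congr rfl fun j _ => ?_
    rw [eval_mul, eval_C, hfp j, hbasis j]
  have hterm : ∀ j : Fin N,
      ((∏ m, (p j - z m)) * ∏ j' ∈ Finset.univ.erase j, (p j - p j')⁻¹) * (z k - p j)⁻¹ * Q
      = (∏ m, (p j - z m)) * ∏ j' ∈ Finset.univ.erase j, ((p j - p j')⁻¹ * (z k - p j')) := by
    intro j
    have hsplit : (z k - p j)⁻¹ * Q = ∏ j' ∈ Finset.univ.erase j, (z k - p j') := by
      rw [hQdef, ← Finset.mul_prod_erase _ _ (Finset.mem_univ j), ← mul_assoc,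
        inv_mul_cancel₀ (hzkp j), one_mul]
    calc ((∏ m, (p j - z m)) * ∏ j' ∈ Finset.univ.erase j, (p j - p j')⁻¹) * (z k - p j)⁻¹ * Q
        = (∏ m, (p j - z m)) * ((∏ j' ∈ Finset.univ.erase j, (p j - p j')⁻¹)
            * ((z k - p j)⁻¹ * Q)) := by ring
      _ = (∏ m, (p j - z m)) * ((∏ j' ∈ Finset.univ.erase j, (p j - p j')⁻¹)
            * ∏ j' ∈ Finset.univ.erase j, (z k - p j')) := by rw [hsplit]
      _ = (∏ m, (p j - z m)) * ∏ j' ∈ Finset.univ.erase j, ((p j - p j')⁻¹ * (z k - p j')) := by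
            rw [Finset.prod_mul_distrib]
  have hkey : ((z k - S) + ∑ j, ((∏ m, (p j - z m))
      * ∏ j' ∈ Finset.univ.erase j, (p j - p j')⁻¹) * (z k - p j)⁻¹) * Q = 0 := by
    rw [add_mul, Finset.sum_mul]
    rw [Finset.sum_congr rfl fun j _ => hterm j, ← hE]
    ring
  rcases mul_eq_zero.mp hkey with h | h
  · exact h
  · exact absurd h hQ0

/-- Bordered Cauchy determinant identity: `det A = (∑ z − ∑ p) · det B`. -/
theorem bordered_cauchy_det (N : ℕ) (hN : 1 ≤ N)
    (z : Fin (N + 1) → ℂ) (p : Fin N → ℂ)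
    (hz : Function.Injective z) (hp : Function.Injective p)
    (hzp : ∀ k j, z k ≠ p j)
    (A B : Matrix (Fin (N + 1)) (Fin (N + 1)) ℂ)
    (hA : ∀ k, A k 0 = z k)
    (hA' : ∀ k (j : Fin N), A k j.succ = (z k - p j)⁻¹)
    (hB : ∀ k, B k 0 = 1)
    (hB' : ∀ k (j : Fin N), B k j.succ = (z k - p j)⁻¹) :
    A.det = ((∑ k, z k) - ∑ j, p j) * B.det := by
  classical
  set S : ℂ := (∑ k, z k) - ∑ j, p j with hS
  set lam : Fin N → ℂ := fun j => (∏ m, (p j - z m))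
    * ∏ j' ∈ Finset.univ.erase j, (p j - p j')⁻¹ with hlam
  set M : Matrix (Fin (N + 1)) (Fin (N + 1)) ℂ :=
    A.updateCol 0 ((fun k => z k) + (-S) • (fun _ => (1 : ℂ))) with hM
  have hAu : A.updateCol 0 (fun k => z k) = A := by
    have : (fun k => z k) = fun k => A k 0 := by funext k; rw [hA]
    rw [this, Matrix.updateCol_eq_self]
  have hBu : A.updateCol 0 (fun _ => (1 : ℂ)) = B := by
    ext i j
    induction j using Fin.cases with
    | zero => rw [Matrix.updateCol_self, hB]
    | succ j' => rw [Matrix.updateCol_ne (Fin.succ_ne_zero j'), hA', hB']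
  have hdetM : M.det = A.det + (-S) * B.det := by
    rw [hM, Matrix.det_updateCol_add, Matrix.det_updateCol_smul, hAu, hBu]
  have hMcol0 : ∀ k, M k 0 = z k - S := by
    intro k
    rw [hM, Matrix.updateCol_self]
    simp; ring
  have hMcol : ∀ k (j : Fin N), M k j.succ = (z k - p j)⁻¹ := by
    intro k j
    rw [hM, Matrix.updateCol_ne (Fin.succ_ne_zero j), hA']
  have hMv : M.mulVec (Fin.cons 1 lam) = 0 := by
    funext k
    have := bc_key N hN z p hz hp hzp k
    calc M.mulVec (Fin.cons 1 lam) k = ∑ j, M k j * (Fin.cons 1 lam : Fin (N+1) → ℂ) j := rfl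
      _ = M k 0 * 1 + ∑ j : Fin N, M k j.succ * lam j := by
          rw [Fin.sum_univ_succ]; simp
      _ = (z k - S) + ∑ j : Fin N, lam j * (z k - p j)⁻¹ := by
          rw [hMcol0, mul_one]
          congr 1
          exact Finset.sum_congr rfl fun j _ => by rw [hMcol, mul_comm]
      _ = 0 := by simpa [hlam, hS] using this
  have hdet0 : M.det = 0 := by
    rw [← Matrix.exists_mulVec_eq_zero_iff]
    refine ⟨Fin.cons 1 lam, ?_, hMv⟩
    intro h
    have := congrFun h 0
    simp at this
  rw [show A.det = M.det - (-S) * B.det by rw [hdetM]; ring, hdet0]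
  ring
end

section
/- Let N ≥ 1 and let z_0, …, z_N, p_1, …, p_N be complex numbers that are pairwise distinct (the z's pairwise distinct, the p's pairwise distinct, and no z equals a p). Then det B ≠ 0, i.e. the bordered Cauchy matrix B is invertible. -/
open scoped BigOperators

open Polynomial Finset

/-- The bordered Cauchy matrix `B` is invertible: `det B ≠ 0`. -/
theorem bordered_cauchy_det_ne_zero (N : ℕ) (hN : 1 ≤ N)
    (z : Fin (N + 1) → ℂ) (p : Fin N → ℂ)
    (hz : Function.Injective z) (hp : Function.Injective p)
    (hzp : ∀ k j, z k ≠ p j)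
    (B : Matrix (Fin (N + 1)) (Fin (N + 1)) ℂ)
    (hB : ∀ k, B k 0 = 1)
    (hB' : ∀ k (j : Fin N), B k j.succ = (z k - p j)⁻¹) :
    B.det ≠ 0 := by
  classical
  intro hdet
  obtain ⟨v, hv, hBv⟩ := (Matrix.exists_mulVec_eq_zero_iff).2 hdet
  -- the polynomial P
  set P : ℂ[X] := C (v 0) * ∏ j, (X - C (p j)) +
      ∑ j : Fin N, C (v j.succ) * ∏ i ∈ univ.erase j, (X - C (p i)) with hP
  have hdegprod : ∀ (s : Finset (Fin N)), (∏ i ∈ s, (X - C (p i))).natDegree = s.card := by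
    intro s
    rw [Polynomial.natDegree_prod _ _ (fun i _ => X_sub_C_ne_zero (p i))]
    simp [natDegree_X_sub_C]
  have hQmonic : ∀ (s : Finset (Fin N)), (∏ i ∈ s, (X - C (p i))).Monic :=
    fun s => monic_prod_of_monic _ _ (fun i _ => monic_X_sub_C (p i))
  -- evaluation of P at z k is zero
  have heval : ∀ k, P.eval (z k) = 0 := by
    intro k
    have hrow := congrFun hBv k
    have hrow' : v 0 + ∑ j : Fin N, (z k - p j)⁻¹ * v j.succ = 0 := by
      have : ∑ j, B k j * v j = 0 := hrow
      rw [Fin.sum_univ_succ, hB k, one_mul] at this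
      simpa only [hB'] using this
    have hQ : ∀ j : Fin N, (∏ i, (X - C (p i))).eval (z k)
        = (z k - p j) * (∏ i ∈ univ.erase j, (X - C (p i))).eval (z k) := by
      intro j
      rw [← Finset.mul_prod_erase univ _ (mem_univ j)]
      simp [eval_prod]
    have hne : ∀ j : Fin N, z k - p j ≠ 0 := fun j => sub_ne_zero.2 (hzp k j)
    have : P.eval (z k) = (∏ i, (X - C (p i))).eval (z k) *
        (v 0 + ∑ j : Fin N, (z k - p j)⁻¹ * v j.succ) := by
      rw [hP]
      simp only [eval_add, eval_mul, eval_C, eval_finset_sum, mul_add, Finset.mul_sum]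
      congr 1
      · ring
      · refine Finset.sum_congr rfl (fun j _ => ?_)
        rw [hQ j, mul_comm (z k - p j) (eval (z k) (∏ i ∈ univ.erase j, (X - C (p i)))),
          mul_assoc, mul_inv_cancel_left₀ (hne j), mul_comm]
    rw [this, hrow', mul_zero]
  -- degree bound
  have hdeg : P.natDegree < N + 1 := by
    have h1 : (C (v 0) * ∏ j, (X - C (p j))).natDegree ≤ N := by
      refine (natDegree_mul_le).trans ?_
      simp [hdegprod univ, natDegree_C]
    have h2 : (∑ j : Fin N, C (v j.succ) * ∏ i ∈ univ.erase j, (X - C (p i))).natDegree ≤ N := by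
      refine (natDegree_sum_le _ _).trans ?_
      simp only [Finset.fold_max_le]
      refine ⟨Nat.zero_le _, fun j _ => (natDegree_mul_le).trans ?_⟩
      simp [hdegprod (univ.erase j), natDegree_C, Finset.card_erase_of_mem]
    rw [hP]
    exact Nat.lt_succ_of_le ((natDegree_add_le _ _).trans (max_le h1 h2))
  have hPzero : P = 0 :=
    Polynomial.eq_zero_of_natDegree_lt_card_of_eval_eq_zero P hz heval
      (by simpa using hdeg)
  -- coefficient N gives v 0 = 0
  have hv0 : v 0 = 0 := by
    have hc := congrArg (fun q => q.coeff N) hPzero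
    simp only [hP, coeff_add, coeff_zero, finset_sum_coeff] at hc
    have hc1 : (C (v 0) * ∏ j, (X - C (p j))).coeff N = v 0 := by
      rw [coeff_C_mul]
      have : (∏ j : Fin N, (X - C (p j))).coeff N = 1 := by
        have := (hQmonic univ).leadingCoeff
        rwa [Polynomial.leadingCoeff, hdegprod univ, Finset.card_univ, Fintype.card_fin] at this
      rw [this, mul_one]
    have hc2 : ∀ j : Fin N, (C (v j.succ) * ∏ i ∈ univ.erase j, (X - C (p i))).coeff N = 0 := by
      intro j
      refine coeff_eq_zero_of_natDegree_lt ?_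
      refine (natDegree_mul_le).trans_lt ?_
      simp [hdegprod (univ.erase j), natDegree_C, Finset.card_erase_of_mem]
      omega
    rw [hc1] at hc
    simpa [hc2] using hc
  -- evaluate at p j gives v j.succ = 0
  have hvj : ∀ j : Fin N, v j.succ = 0 := by
    intro j
    have he := congrArg (fun q => q.eval (p j)) hPzero
    simp only [hP, eval_add, eval_mul, eval_C, eval_finset_sum, eval_zero, hv0, zero_mul,
      zero_add] at he
    have hsum : ∀ i : Fin N, i ≠ j →
        v i.succ * (∏ m ∈ univ.erase i, (X - C (p m))).eval (p j) = 0 := by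
      intro i hij
      have : (∏ m ∈ univ.erase i, (X - C (p m))).eval (p j) = 0 := by
        rw [eval_prod]
        exact Finset.prod_eq_zero (Finset.mem_erase.2 ⟨Ne.symm hij, mem_univ j⟩) (by simp)
      rw [this, mul_zero]
    rw [Finset.sum_eq_single j (fun i _ hij => hsum i hij) (by simp)] at he
    have hprod : (∏ m ∈ univ.erase j, (X - C (p m))).eval (p j) ≠ 0 := by
      rw [eval_prod]
      refine Finset.prod_ne_zero_iff.2 (fun m hm => ?_)
      simp only [eval_sub, eval_X, eval_C]
      exact sub_ne_zero.2 (fun h => (Finset.mem_erase.1 hm).1 (hp h).symm)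
    exact (mul_eq_zero.1 he).resolve_right hprod
  apply hv
  funext i
  refine Fin.cases hv0 hvj i
end

section
/- Let N ≥ 1, let z_0, …, z_N, p_1, …, p_N be complex numbers that are pairwise distinct (the z's pairwise distinct, the p's pairwise distinct, and no z equals a p), let t be a nonzero real number and x a complex number. Then there exist unique complex numbers λ, μ_1, …, μ_N such that λ + ∑_{j=1}^{N} μ_j/(z_k − p_j) = (z_k − x)/(2t) for every k = 0, …, N, and moreover λ = (1/(2t)) (∑_{α=0}^{N} z_α − ∑_{j=1}^{N} p_j − x). -/
open scoped BigOperators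
open Polynomial Finset

private lemma lsu_eval_key (N : ℕ) (p : Fin N → ℂ) (w : ℂ) (hw : ∀ j, w ≠ p j)
    (l : ℂ) (μ : Fin N → ℂ) :
    (C l * ∏ j, (X - C (p j)) +
        ∑ j, C (μ j) * ∏ i ∈ Finset.univ.erase j, (X - C (p i))).eval w
      = (l + ∑ j, μ j / (w - p j)) * (∏ j, (X - C (p j))).eval w := by
  simp only [eval_add, eval_mul, eval_C, eval_finset_sum, eval_prod, eval_sub, eval_X,
    add_mul, Finset.sum_mul]
  congr 1
  refine Finset.sum_congr rfl fun j _ => ?_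
  have hsplit : ∏ i, (w - p i) = (w - p j) * ∏ i ∈ Finset.univ.erase j, (w - p i) :=
    (Finset.mul_prod_erase _ _ (Finset.mem_univ j)).symm
  rw [hsplit, div_mul_eq_mul_div, ← mul_assoc, mul_comm (μ j) (w - p j), mul_assoc,
    mul_div_assoc, eq_comm, mul_comm (w - p j), div_mul_cancel₀ _ (sub_ne_zero.mpr (hw j))]

private lemma lsu_degQ (N : ℕ) (p : Fin N → ℂ) :
    (∏ j, (X - C (p j)) : ℂ[X]).natDegree = N := by
  rw [natDegree_prod_of_monic _ _ fun j _ => monic_X_sub_C _]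
  simp [natDegree_X_sub_C]

private lemma lsu_degQe (N : ℕ) (p : Fin N → ℂ) (j : Fin N) :
    (∏ i ∈ Finset.univ.erase j, (X - C (p i)) : ℂ[X]).natDegree = N - 1 := by
  rw [natDegree_prod_of_monic _ _ fun i _ => monic_X_sub_C _]
  simp [natDegree_X_sub_C, Finset.card_erase_of_mem]

private lemma lsu_degP (N : ℕ) (p : Fin N → ℂ) (l : ℂ) (μ : Fin N → ℂ) :
    (C l * ∏ j, (X - C (p j)) +
        ∑ j, C (μ j) * ∏ i ∈ Finset.univ.erase j, (X - C (p i))).natDegree ≤ N := by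
  refine (natDegree_add_le _ _).trans (max_le ?_ ?_)
  · exact (natDegree_C_mul_le _ _).trans (le_of_eq (lsu_degQ N p))
  · refine natDegree_sum_le_of_forall_le _ _ fun j _ => ?_
    refine (natDegree_C_mul_le _ _).trans ?_
    rw [lsu_degQe N p j]; omega

/-- Homogeneous uniqueness: the only solution of the homogeneous system is zero. -/
private lemma lsu_zero (N : ℕ) (z : Fin (N + 1) → ℂ) (p : Fin N → ℂ)
    (hz : Function.Injective z) (hp : Function.Injective p)
    (hzp : ∀ k j, z k ≠ p j)
    (l : ℂ) (μ : Fin N → ℂ)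
    (h : ∀ k, l + ∑ j, μ j / (z k - p j) = 0) :
    l = 0 ∧ μ = 0 := by
  set Q : ℂ[X] := ∏ j, (X - C (p j)) with hQdef
  set P : ℂ[X] := C l * Q + ∑ j, C (μ j) * ∏ i ∈ Finset.univ.erase j, (X - C (p i))
    with hPdef
  have heval : ∀ k, P.eval (z k) = 0 := by
    intro k
    rw [hPdef, lsu_eval_key N p (z k) (fun j => hzp k j) l μ, h k, zero_mul]
  have hP0 : P = 0 :=
    eq_zero_of_natDegree_lt_card_of_eval_eq_zero P hz heval
      (by simpa using Nat.lt_succ_of_le (lsu_degP N p l μ))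
  have hμ : μ = 0 := by
    funext j
    have hev : P.eval (p j) = 0 := by rw [hP0]; simp
    have hQj : Q.eval (p j) = 0 := by
      simp only [hQdef, eval_prod, eval_sub, eval_X, eval_C]
      exact Finset.prod_eq_zero (Finset.mem_univ j) (by ring)
    have hsum : (∑ i, C (μ i) * ∏ m ∈ Finset.univ.erase i, (X - C (p m))).eval (p j)
        = μ j * ∏ m ∈ Finset.univ.erase j, (p j - p m) := by
      rw [eval_finset_sum]
      rw [Finset.sum_eq_single j]
      · simp [eval_prod]
      · intro i _ hij
        simp only [eval_mul, eval_C, eval_prod, eval_sub, eval_X]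
        refine mul_eq_zero_of_right _ ?_
        exact Finset.prod_eq_zero (Finset.mem_erase.mpr ⟨Ne.symm hij, Finset.mem_univ j⟩)
          (by ring)
      · intro hj; exact absurd (Finset.mem_univ j) hj
    have hprod : (∏ m ∈ Finset.univ.erase j, (p j - p m)) ≠ 0 := by
      refine Finset.prod_ne_zero_iff.mpr fun m hm => sub_ne_zero.mpr ?_
      exact fun hpm => (Finset.mem_erase.mp hm).1 (hp hpm.symm)
    have : μ j * ∏ m ∈ Finset.univ.erase j, (p j - p m) = 0 := by
      have := hev
      rw [hPdef] at this
      simp only [eval_add, eval_mul, eval_C] at this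
      rw [hQj, mul_zero, zero_add] at this
      rw [← hsum]
      simpa using this
    simpa [hprod] using mul_eq_zero.mp this
  refine ⟨?_, hμ⟩
  have hQne : Q ≠ 0 := (monic_prod_of_monic _ _ fun j _ => monic_X_sub_C _).ne_zero
  have : C l * Q = 0 := by
    have := hP0
    rw [hPdef, hμ] at this
    simpa using this
  rcases mul_eq_zero.mp this with h' | h'
  · simpa using (C_eq_zero.mp h')
  · exact absurd h' hQne

/-- The value of `λ` for any solution of the inhomogeneous system. -/
private lemma lsu_lambda (N : ℕ) (hN : 1 ≤ N) (z : Fin (N + 1) → ℂ) (p : Fin N → ℂ)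
    (hz : Function.Injective z) (hzp : ∀ k j, z k ≠ p j)
    (c x : ℂ) (l : ℂ) (μ : Fin N → ℂ)
    (h : ∀ k, l + ∑ j, μ j / (z k - p j) = c * (z k - x)) :
    l = c * ((∑ k, z k) - (∑ j, p j) - x) := by
  set Q : ℂ[X] := ∏ j, (X - C (p j)) with hQdef
  set P : ℂ[X] := C l * Q + ∑ j, C (μ j) * ∏ i ∈ Finset.univ.erase j, (X - C (p i))
    with hPdef
  set q : Fin (N + 1) → ℂ := Fin.cons x p with hqdef
  set A : ℂ[X] := ∏ i, (X - C (q i)) with hAdef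
  set B : ℂ[X] := ∏ k, (X - C (z k)) with hBdef
  have hAm : A.Monic := monic_prod_of_monic _ _ fun i _ => monic_X_sub_C _
  have hBm : B.Monic := monic_prod_of_monic _ _ fun i _ => monic_X_sub_C _
  have hAdeg : A.natDegree = N + 1 := by
    rw [hAdef, natDegree_prod_of_monic _ _ fun i _ => monic_X_sub_C _]
    simp [natDegree_X_sub_C]
  have hBdeg : B.natDegree = N + 1 := by
    rw [hBdef, natDegree_prod_of_monic _ _ fun i _ => monic_X_sub_C _]
    simp [natDegree_X_sub_C]
  -- degree of A - B is at most N
  have hABdeg : (A - B).natDegree ≤ N := by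
    by_cases h0 : A - B = 0
    · simp [h0]
    · have hd : A.degree = B.degree := by
        rw [degree_eq_natDegree hAm.ne_zero, degree_eq_natDegree hBm.ne_zero, hAdeg, hBdeg]
      have hlt : (A - B).degree < A.degree :=
        degree_sub_lt hd hAm.ne_zero (by rw [hAm.leadingCoeff, hBm.leadingCoeff])
      rw [degree_eq_natDegree hAm.ne_zero, hAdeg] at hlt
      have := (natDegree_lt_iff_degree_lt h0).mpr hlt
      omega
  set D : ℂ[X] := C c * (A - B) - P with hDdef
  have hDdeg : D.natDegree ≤ N := by
    refine (natDegree_sub_le _ _).trans (max_le ?_ (lsu_degP N p l μ))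
    exact (natDegree_C_mul_le _ _).trans hABdeg
  have hDeval : ∀ k, D.eval (z k) = 0 := by
    intro k
    have hA : A.eval (z k) = (z k - x) * Q.eval (z k) := by
      simp [hAdef, hqdef, eval_prod, Fin.prod_univ_succ, hQdef]
    have hB : B.eval (z k) = 0 := by
      simp only [hBdef, eval_prod, eval_sub, eval_X, eval_C]
      exact Finset.prod_eq_zero (Finset.mem_univ k) (by ring)
    have hP : P.eval (z k) = c * (z k - x) * Q.eval (z k) := by
      rw [hPdef, lsu_eval_key N p (z k) (fun j => hzp k j) l μ, h k]
    simp only [hDdef, eval_sub, eval_mul, eval_C, hA, hB, hP]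
    ring
  have hD0 : D = 0 :=
    eq_zero_of_natDegree_lt_card_of_eval_eq_zero D hz hDeval
      (by simpa using Nat.lt_succ_of_le hDdeg)
  -- compare coefficients of X^N
  have hAc : A.coeff N = -(x + ∑ j, p j) := by
    have := prod_X_sub_C_coeff_card_pred (Finset.univ : Finset (Fin (N + 1))) q
      (by simp)
    simp only [Finset.card_univ, Fintype.card_fin, Nat.add_sub_cancel] at this
    rw [hAdef, this, hqdef, Fin.sum_univ_succ]
    simp
  have hBc : B.coeff N = -∑ k, z k := by
    have := prod_X_sub_C_coeff_card_pred (Finset.univ : Finset (Fin (N + 1))) z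
      (by simp)
    simp only [Finset.card_univ, Fintype.card_fin, Nat.add_sub_cancel] at this
    rw [hBdef, this]
  have hQm : Q.Monic := monic_prod_of_monic _ _ fun j _ => monic_X_sub_C _
  have hQc : Q.coeff N = 1 := by
    have := hQm.coeff_natDegree
    rwa [lsu_degQ N p] at this
  have hPc : P.coeff N = l := by
    rw [hPdef, coeff_add, coeff_C_mul, hQc, mul_one, finset_sum_coeff]
    rw [Finset.sum_eq_zero, add_zero]
    intro j _
    refine coeff_eq_zero_of_natDegree_lt ?_
    refine lt_of_le_of_lt ((natDegree_C_mul_le _ _).trans (le_of_eq (lsu_degQe N p j))) ?_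
    omega
  have hco : D.coeff N = 0 := by rw [hD0]; simp
  rw [hDdef, coeff_sub, coeff_C_mul, coeff_sub, hAc, hBc, hPc, sub_eq_zero] at hco
  rw [← hco]; ring

/-- Unique solvability of the linear system
`λ + ∑_j μ_j/(z_k − p_j) = (z_k − x)/(2t)`, `k = 0, …, N`, together with the
explicit value of `λ`. -/
theorem linear_system_unique_solution (N : ℕ) (hN : 1 ≤ N)
    (z : Fin (N + 1) → ℂ) (p : Fin N → ℂ)
    (hz : Function.Injective z) (hp : Function.Injective p)
    (hzp : ∀ k j, z k ≠ p j)
    (t : ℝ) (ht : t ≠ 0) (x : ℂ) :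
    (∃! lm : ℂ × (Fin N → ℂ),
        ∀ k, lm.1 + ∑ j, lm.2 j / (z k - p j) = (z k - x) / (2 * (t : ℂ))) ∧
    (∀ lm : ℂ × (Fin N → ℂ),
        (∀ k, lm.1 + ∑ j, lm.2 j / (z k - p j) = (z k - x) / (2 * (t : ℂ))) →
        lm.1 = (1 / (2 * (t : ℂ))) * ((∑ k, z k) - (∑ j, p j) - x)) := by
  constructor
  · -- existence and uniqueness
    let T : (ℂ × (Fin N → ℂ)) →ₗ[ℂ] (Fin (N + 1) → ℂ) :=
      { toFun := fun lm => fun k => lm.1 + ∑ j, lm.2 j * (z k - p j)⁻¹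
        map_add' := by
          intro a b
          funext k
          simp only [Prod.fst_add, Prod.snd_add, Pi.add_apply, add_mul,
            Finset.sum_add_distrib]
          ring
        map_smul' := by
          intro r a
          funext k
          simp only [Prod.smul_fst, Prod.smul_snd, Pi.smul_apply, smul_eq_mul,
            RingHom.id_apply, mul_add, Finset.mul_sum, mul_assoc] }
    have hker : ∀ a : ℂ × (Fin N → ℂ), T a = 0 → a = 0 := by
      intro a h0
      have h' : ∀ k, a.1 + ∑ j, a.2 j / (z k - p j) = 0 := by
        intro k
        have := congrFun h0 k
        simpa [T, div_eq_mul_inv] using this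
      obtain ⟨h1, h2⟩ := lsu_zero N z p hz hp hzp a.1 a.2 h'
      exact Prod.ext h1 h2
    have hinj : Function.Injective T :=
      LinearMap.ker_eq_bot.mp (LinearMap.ker_eq_bot'.mpr hker)
    have hfr : Module.finrank ℂ (ℂ × (Fin N → ℂ)) = Module.finrank ℂ (Fin (N + 1) → ℂ) := by
      simp [Module.finrank_prod, Module.finrank_pi, add_comm]
    have hsurj : Function.Surjective T :=
      (LinearMap.injective_iff_surjective_of_finrank_eq_finrank hfr).mp hinj
    obtain ⟨lm, hlm⟩ := hsurj (fun k => (z k - x) / (2 * (t : ℂ)))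
    have hlm' : ∀ k, lm.1 + ∑ j, lm.2 j / (z k - p j) = (z k - x) / (2 * (t : ℂ)) := by
      intro k
      have := congrFun hlm k
      simpa [T, div_eq_mul_inv] using this
    refine ⟨lm, hlm', ?_⟩
    intro lm' hlm''
    have hdiff : ∀ k, (lm'.1 - lm.1) + ∑ j, (lm'.2 j - lm.2 j) / (z k - p j) = 0 := by
      intro k
      have hsplit : ∑ j, (lm'.2 j - lm.2 j) / (z k - p j)
          = ∑ j, lm'.2 j / (z k - p j) - ∑ j, lm.2 j / (z k - p j) := by
        rw [← Finset.sum_sub_distrib]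
        exact Finset.sum_congr rfl fun j _ => sub_div _ _ _
      rw [hsplit]
      linear_combination (hlm'' k) - (hlm' k)
    obtain ⟨h1, h2⟩ := lsu_zero N z p hz hp hzp _ _ hdiff
    have h2' : ∀ j, lm'.2 j = lm.2 j := by
      intro j
      have := congrFun h2 j
      simpa [sub_eq_zero] using this
    exact Prod.ext (by linear_combination h1) (funext h2')
  · -- lambda formula
    intro lm hlm
    refine lsu_lambda N hN z p hz hzp (1 / (2 * (t : ℂ))) x lm.1 lm.2 ?_
    intro k
    rw [hlm k]
    ring
end

section
/- Let N ≥ 1 and let z_0, …, z_N and p_1, …, p_N be complex numbers. Let Q(X) = ∏_{j=1}^{N} (X − p_j) and R(X) = X·Q(X). Then V(R) = (∑_{α=0}^{N} z_α − ∑_{j=1}^{N} p_j) · V(Q), where V is the determinant linear form defined in the context. -/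
open scoped BigOperators
open Polynomial

/-- With `Q(X) = ∏ (X − p_j)` and `R(X) = X·Q(X)`, one has
`V(R) = (∑ z_α − ∑ p_j) · V(Q)` for the determinant linear form `V`. -/
theorem det_form_of_XQ (N : ℕ) (hN : 1 ≤ N)
    (z : Fin (N + 1) → ℂ) (p : Fin N → ℂ)
    (Q R : Polynomial ℂ)
    (hQ : Q = ∏ j, (X - C (p j)))
    (hR : R = X * Q) :
    Matrix.det (Matrix.of fun (k : Fin (N + 1)) (j : Fin (N + 1)) =>
      (Fin.cases (R.eval (z k)) (fun j' : Fin N => z k ^ (j' : ℕ)) j : ℂ))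
    = ((∑ k, z k) - ∑ j, p j) *
      Matrix.det (Matrix.of fun (k : Fin (N + 1)) (j : Fin (N + 1)) =>
        (Fin.cases (Q.eval (z k)) (fun j' : Fin N => z k ^ (j' : ℕ)) j : ℂ)) := by
  classical
  set c : ℂ := (∑ k, z k) - ∑ j, p j with hc
  set W : Polynomial ℂ := ∏ k, (X - C (z k)) with hW
  set D : Polynomial ℂ := R - C c * Q - W with hD
  set B : Matrix (Fin (N+1)) (Fin (N+1)) ℂ :=
    Matrix.of fun k j => Fin.cases (0:ℂ) (fun j' : Fin N => z k ^ (j' : ℕ)) j with hB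
  have key : ∀ v : Fin (N+1) → ℂ,
      (Matrix.of fun (k : Fin (N + 1)) (j : Fin (N + 1)) =>
        (Fin.cases (v k) (fun j' : Fin N => z k ^ (j' : ℕ)) j : ℂ))
      = B.updateCol 0 v := by
    intro v
    ext k j
    induction j using Fin.cases with
    | zero => simp [hB, Matrix.updateCol_apply]
    | succ j' => simp [hB, Matrix.updateCol_apply, Fin.succ_ne_zero]
  -- degree facts
  have hQm : Q.Monic := by
    rw [hQ]; exact monic_prod_of_monic _ _ fun j _ => monic_X_sub_C _
  have hQd : Q.natDegree = N := by
    rw [hQ, natDegree_prod_of_monic _ _ fun j _ => monic_X_sub_C _]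
    simp [natDegree_X_sub_C]
  have hWm : W.Monic := monic_prod_of_monic _ _ fun j _ => monic_X_sub_C _
  have hWd : W.natDegree = N + 1 := by
    rw [hW, natDegree_prod_of_monic _ _ fun j _ => monic_X_sub_C _]
    simp [natDegree_X_sub_C]
  have hQcoeff : Q.coeff (N - 1) = -∑ j, p j := by
    have := prod_X_sub_C_coeff_card_pred (Finset.univ : Finset (Fin N)) p
      (by simp only [Finset.card_univ, Fintype.card_fin]; omega)
    simpa [hQ] using this
  have hWcoeff : W.coeff N = -∑ k, z k := by
    have := prod_X_sub_C_coeff_card_pred (Finset.univ : Finset (Fin (N+1))) z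
      (by simp)
    simpa [hW] using this
  have hDdeg : D.natDegree < N := by
    have hzero : ∀ m : ℕ, N ≤ m → D.coeff m = 0 := by
      intro m hm
      have hm1 : m = (m - 1) + 1 := (Nat.succ_pred_eq_of_pos (lt_of_lt_of_le hN hm)).symm
      have hRm : R.coeff m = Q.coeff (m - 1) := by
        conv_lhs => rw [hR, hm1]
        rw [coeff_X_mul]
      rw [hD, coeff_sub, coeff_sub, coeff_C_mul, hRm]
      rcases eq_or_lt_of_le hm with h | h
      · -- m = N
        subst h
        have hq1 : Q.coeff N = 1 := hQd ▸ hQm.coeff_natDegree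
        rw [hQcoeff, hWcoeff, hq1, hc]
        ring
      · rcases eq_or_lt_of_le (Nat.succ_le_of_lt h) with h2 | h2
        · -- m = N + 1
          rw [← h2]
          have h3 : Q.coeff (N + 1 - 1) = 1 := by
            simpa [hQd] using hQm.coeff_natDegree
          have h4 : Q.coeff (N + 1) = 0 :=
            coeff_eq_zero_of_natDegree_lt (by omega)
          have h5 : W.coeff (N + 1) = 1 := by simpa [hWd] using hWm.coeff_natDegree
          rw [h3, h4, h5]; ring
        · -- m > N + 1
          have h3 : Q.coeff (m - 1) = 0 := coeff_eq_zero_of_natDegree_lt (by omega)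
          have h4 : Q.coeff m = 0 := coeff_eq_zero_of_natDegree_lt (by omega)
          have h5 : W.coeff m = 0 := coeff_eq_zero_of_natDegree_lt (by omega)
          rw [h3, h4, h5]; ring
    by_cases hD0 : D = 0
    · rw [hD0]; simp; omega
    · rw [Polynomial.natDegree_lt_iff_degree_lt hD0,
        Polynomial.degree_lt_iff_coeff_zero]
      intro m hm
      exact hzero m (by exact_mod_cast hm)
  -- evaluation decomposition
  have hWeval : ∀ k, W.eval (z k) = 0 := by
    intro k
    rw [hW, eval_prod]
    exact Finset.prod_eq_zero (Finset.mem_univ k) (by simp)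
  have heval : (fun k => R.eval (z k))
      = (fun k => c * Q.eval (z k)) + ((fun k => W.eval (z k)) + fun k => D.eval (z k)) := by
    funext k
    simp only [Pi.add_apply, hD, eval_sub, eval_mul, eval_C]
    ring
  rw [key, key, heval, Matrix.det_updateCol_add, Matrix.det_updateCol_add]
  have hdet1 : (B.updateCol 0 fun k => c * Q.eval (z k)).det
      = c * (B.updateCol 0 fun k => Q.eval (z k)).det := by
    have := Matrix.det_updateCol_smul B 0 c (fun k => Q.eval (z k))
    simpa [smul_eq_mul, Pi.smul_def] using this
  have hdetW : (B.updateCol 0 fun k => W.eval (z k)).det = 0 := by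
    apply Matrix.det_eq_zero_of_column_eq_zero 0
    intro i
    simp [Matrix.updateCol_apply, hWeval]
  have hdetD : (B.updateCol 0 fun k => D.eval (z k)).det = 0 := by
    have hcol : (fun k => D.eval (z k))
        = fun k => ∑ i : Fin (N+1),
            (Fin.cases (motive := fun _ => ℂ) 0 (fun j' : Fin N => D.coeff (j' : ℕ)) i) • B k i := by
      funext k
      rw [eval_eq_sum_range' hDdeg (z k)]
      rw [Fin.sum_univ_succ]
      simp only [hB, Fin.cases_zero, Fin.cases_succ, zero_smul, zero_add, smul_eq_mul,
        zero_mul, Matrix.of_apply]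
      exact Fin.sum_univ_eq_sum_range (fun i => D.coeff i * z k ^ i) N |>.symm
    rw [hcol, Matrix.det_updateCol_sum]
    simp
  rw [hdet1, hdetW, hdetD]
  ring
end

section
/- Let u_0 : ℝ → ℝ be continuously differentiable with u_0(y) → 0 and u_0′(y) → 0 as |y| → ∞, let t ∈ ℝ, and let x ∈ ℝ with x ∉ K_t(u_0). Then the set {y ∈ ℝ : f_t(y) = x} is finite with odd cardinality, and f_t′(y) ≠ 0 for every y in this set. -/
open Filter Set

/-- `g` crosses zero transversally at `s`: on small punctured one-sided neighborhoods, `g`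
has (opposite) constant signs. -/
def Flip (g : ℝ → ℝ) (s : ℝ) : Prop :=
  ∃ ε > 0, ((∀ y ∈ Set.Ioo (s - ε) s, g y < 0) ∧ (∀ y ∈ Set.Ioo s (s + ε), 0 < g y)) ∨
    ((∀ y ∈ Set.Ioo (s - ε) s, 0 < g y) ∧ (∀ y ∈ Set.Ioo s (s + ε), g y < 0))

lemma exists_zero_of_mul_neg {g : ℝ → ℝ} (hg : Continuous g) {a b : ℝ} (hab : a ≤ b)
    (h : g a * g b < 0) : ∃ c ∈ Set.Icc a b, g c = 0 := by
  rcases mul_neg_iff.mp h with ⟨ha, hb⟩ | ⟨ha, hb⟩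
  · rcases intermediate_value_Icc' hab hg.continuousOn ⟨hb.le, ha.le⟩ with ⟨c, hc, hc0⟩
    exact ⟨c, hc, hc0⟩
  · rcases intermediate_value_Icc hab hg.continuousOn ⟨ha.le, hb.le⟩ with ⟨c, hc, hc0⟩
    exact ⟨c, hc, hc0⟩

/-- Parity counting of transversal zeros: the number of zeros in `[a,b]` is odd iff the
signs of `g a` and `g b` differ. -/
lemma parity_of_flips {g : ℝ → ℝ} (hg : Continuous g) :
    ∀ n : ℕ, ∀ a b : ℝ, a < b → g a ≠ 0 → g b ≠ 0 →
    ({y ∈ Set.Icc a b | g y = 0}).Finite →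
    ({y ∈ Set.Icc a b | g y = 0}).ncard = n →
    (∀ s ∈ {y ∈ Set.Icc a b | g y = 0}, Flip g s) →
    (g a * g b < 0 ↔ Odd n) := by
  intro n
  induction n using Nat.strong_induction_on with
  | _ n IH =>
    intro a b hab ha hb hfin hcard hflip
    set S : Set ℝ := {y ∈ Set.Icc a b | g y = 0} with hS
    rcases S.eq_empty_or_nonempty with hSe | hSne
    · -- no zeros: same signs, n = 0
      have hn : n = 0 := by rw [← hcard, hSe]; simp
      subst hn
      simp only [Nat.odd_iff]
      constructor
      · intro hlt
        rcases exists_zero_of_mul_neg hg hab.le hlt with ⟨c, hc, hc0⟩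
        have hcS : c ∈ S := ⟨hc, hc0⟩
        rw [hSe] at hcS
        exact absurd hcS (Set.notMem_empty c)
      · omega
    · -- take the least zero y₁
      have hTne : hfin.toFinset.Nonempty := by
        rwa [← Set.Finite.toFinset_nonempty hfin] at hSne
      set y₁ := hfin.toFinset.min' hTne with hy₁def
      have hy₁S : y₁ ∈ S := hfin.mem_toFinset.mp (hfin.toFinset.min'_mem hTne)
      have hy₁min : ∀ s ∈ S, y₁ ≤ s := fun s hs =>
        hfin.toFinset.min'_le s (hfin.mem_toFinset.mpr hs)
      have hy₁I := hy₁S.1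
      have hy₁0 := hy₁S.2
      have hay₁ : a < y₁ := lt_of_le_of_ne hy₁I.1 (fun h => ha (h ▸ hy₁0))
      have hy₁b : y₁ < b := lt_of_le_of_ne hy₁I.2 (fun h => hb (h.symm ▸ hy₁0))
      obtain ⟨ε, hε, hflip₁⟩ := hflip y₁ ⟨hy₁I, hy₁0⟩
      -- sample points: e on the left, c on the right
      set d : ℝ := max a (y₁ - ε) with hd
      set e : ℝ := (d + y₁) / 2 with he
      have hdy₁ : d < y₁ := max_lt hay₁ (by linarith)
      have hde : d < e := by rw [he]; linarith
      have hey₁ : e < y₁ := by rw [he]; linarith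
      have hae : a ≤ e := le_trans (le_max_left _ _) hde.le
      have heIoo : e ∈ Set.Ioo (y₁ - ε) y₁ :=
        ⟨lt_of_le_of_lt (le_max_right a (y₁ - ε)) hde, hey₁⟩
      set δ : ℝ := min ε (b - y₁) with hδ
      have hδpos : 0 < δ := lt_min hε (by linarith)
      set c : ℝ := y₁ + δ / 2 with hc
      have hy₁c : y₁ < c := by rw [hc]; linarith
      have hcb : c < b := by
        have : δ ≤ b - y₁ := min_le_right _ _
        rw [hc]; linarith
      have hcIoo : c ∈ Set.Ioo y₁ (y₁ + ε) := by
        refine ⟨hy₁c, ?_⟩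
        have : δ ≤ ε := min_le_left _ _
        rw [hc]; linarith
      -- signs at e and c
      have hec : g e * g c < 0 := by
        rcases hflip₁ with ⟨hL, hR⟩ | ⟨hL, hR⟩
        · exact mul_neg_of_neg_of_pos (hL e heIoo) (hR c hcIoo)
        · rw [mul_comm]; exact mul_neg_of_neg_of_pos (hR c hcIoo) (hL e heIoo)
      have hgc : g c ≠ 0 := by
        rcases hflip₁ with ⟨_, hR⟩ | ⟨_, hR⟩
        · exact (hR c hcIoo).ne'
        · exact (hR c hcIoo).ne
      have hge : g e ≠ 0 := by
        rcases hflip₁ with ⟨hL, _⟩ | ⟨hL, _⟩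
        · exact (hL e heIoo).ne
        · exact (hL e heIoo).ne'
      -- g a and g e have the same sign (no zeros left of y₁)
      have hae_sign : 0 < g a * g e := by
        rcases lt_trichotomy (g a * g e) 0 with hlt | heq | hgt
        · rcases exists_zero_of_mul_neg hg hae hlt with ⟨z, hzI, hz0⟩
          have hzS : z ∈ S := ⟨⟨hzI.1, le_trans hzI.2 (le_trans hey₁.le hy₁I.2)⟩, hz0⟩
          have := hy₁min z hzS
          have : y₁ ≤ e := le_trans this hzI.2
          linarith [hey₁]
        · exact absurd (mul_eq_zero.mp heq) (by push_neg; exact ⟨ha, hge⟩)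
        · exact hgt
      -- the remaining zeros form the zero set over [c, b]
      have hSrest : {y ∈ Set.Icc c b | g y = 0} = S \ {y₁} := by
        ext z
        constructor
        · rintro ⟨hzI, hz0⟩
          refine ⟨⟨⟨le_trans (le_trans hae hey₁.le) (le_trans hy₁c.le hzI.1), hzI.2⟩, hz0⟩, ?_⟩
          intro hzy₁
          rw [Set.mem_singleton_iff] at hzy₁
          rw [hzy₁] at hzI
          linarith [hzI.1]
        · rintro ⟨⟨hzI, hz0⟩, hzne⟩
          rw [Set.mem_singleton_iff] at hzne
          have hy₁z : y₁ < z := lt_of_le_of_ne (hy₁min z ⟨hzI, hz0⟩) (Ne.symm hzne)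
          have hzc : c ≤ z := by
            by_contra hzc
            push_neg at hzc
            have hzIoo : z ∈ Set.Ioo y₁ (y₁ + ε) := ⟨hy₁z, lt_trans hzc hcIoo.2⟩
            rcases hflip₁ with ⟨_, hR⟩ | ⟨_, hR⟩
            · exact (hR z hzIoo).ne' hz0
            · exact (hR z hzIoo).ne hz0
          exact ⟨⟨hzc, hzI.2⟩, hz0⟩
      have hfin' : ({y ∈ Set.Icc c b | g y = 0}).Finite := by
        rw [hSrest]; exact hfin.diff
      have hnpos : 0 < n := by
        rw [← hcard]
        exact (Set.nonempty_iff_ne_empty.mp hSne) |> fun h =>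
          Set.ncard_pos hfin |>.mpr hSne
      have hcard' : ({y ∈ Set.Icc c b | g y = 0}).ncard = n - 1 := by
        rw [hSrest, Set.ncard_diff_singleton_of_mem hy₁S, hcard]
      have hIH : g c * g b < 0 ↔ Odd (n - 1) := by
        refine IH (n - 1) (by omega) c b hcb hgc hb hfin' hcard' ?_
        intro s hs
        rw [hSrest] at hs
        exact hflip s hs.1
      -- combine signs
      have hkey : g a * g b < 0 ↔ ¬ (g c * g b < 0) := by
        have hac : g a * g c < 0 := by
          rcases mul_pos_iff.mp hae_sign with ⟨ha', he'⟩ | ⟨ha', he'⟩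
          · rcases mul_neg_iff.mp hec with ⟨_, hc'⟩ | ⟨he'', _⟩
            · exact mul_neg_of_pos_of_neg ha' hc'
            · linarith
          · rcases mul_neg_iff.mp hec with ⟨he'', _⟩ | ⟨_, hc'⟩
            · linarith
            · exact mul_neg_of_neg_of_pos ha' hc'
        rcases mul_neg_iff.mp hac with ⟨ha', hc'⟩ | ⟨ha', hc'⟩
        · constructor
          · intro h
            have hb' : g b < 0 := by
              rcases mul_neg_iff.mp h with ⟨_, h2⟩ | ⟨h1, _⟩
              · exact h2
              · linarith
            intro hcb'
            rcases mul_neg_iff.mp hcb' with ⟨h1, _⟩ | ⟨_, h2⟩ <;> linarith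
          · intro h
            have hcbne : g c * g b ≠ 0 := mul_ne_zero hgc hb
            have hpos : 0 < g c * g b := lt_of_le_of_ne (not_lt.mp h) (Ne.symm hcbne)
            have hb' : g b < 0 := by
              rcases mul_pos_iff.mp hpos with ⟨h1, _⟩ | ⟨_, h2⟩
              · linarith
              · exact h2
            exact mul_neg_of_pos_of_neg ha' hb'
        · constructor
          · intro h
            have hb' : 0 < g b := by
              rcases mul_neg_iff.mp h with ⟨h1, _⟩ | ⟨_, h2⟩
              · linarith
              · exact h2
            intro hcb'
            rcases mul_neg_iff.mp hcb' with ⟨_, h2⟩ | ⟨h1, _⟩ <;> linarith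
          · intro h
            have hcbne : g c * g b ≠ 0 := mul_ne_zero hgc hb
            have hpos : 0 < g c * g b := lt_of_le_of_ne (not_lt.mp h) (Ne.symm hcbne)
            have hb' : 0 < g b := by
              rcases mul_pos_iff.mp hpos with ⟨_, h2⟩ | ⟨h1, _⟩
              · exact h2
              · linarith
            exact mul_neg_of_neg_of_pos ha' hb'
      rw [hkey, hIH, Nat.odd_iff, Nat.odd_iff]
      omega

/-- A `C¹` function with nonvanishing derivative at a zero crosses transversally. -/
lemma flip_of_deriv_ne {f : ℝ → ℝ} (hf : ContDiff ℝ 1 f) {x s : ℝ} (h0 : f s = x)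
    (hd : deriv f s ≠ 0) : Flip (fun y => f y - x) s := by
  have hdc : Continuous (deriv f) := hf.continuous_deriv le_rfl
  rcases hd.lt_or_gt with hneg | hpos
  · have : ∀ᶠ y in nhds s, deriv f y < 0 := hdc.continuousAt.eventually_lt continuous_const.continuousAt hneg
    rcases Metric.eventually_nhds_iff_ball.mp this with ⟨ε, hε, hball⟩
    have hmono : StrictAntiOn f (Set.Ioo (s - ε) (s + ε)) := by
      refine strictAntiOn_of_deriv_neg (convex_Ioo _ _) (hf.continuous.continuousOn) ?_
      intro y hy
      rw [interior_Ioo] at hy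
      exact hball y (by rwa [Real.ball_eq_Ioo])
    have hsmem : s ∈ Set.Ioo (s - ε) (s + ε) := by constructor <;> linarith
    refine ⟨ε, hε, Or.inr ⟨?_, ?_⟩⟩
    · intro y hy
      have h1 : f s < f y := hmono ⟨hy.1, lt_trans hy.2 (by linarith)⟩ hsmem hy.2
      show 0 < f y - x
      linarith [h0]
    · intro y hy
      have h1 : f y < f s := hmono hsmem ⟨lt_trans (by linarith) hy.1, hy.2⟩ hy.1
      show f y - x < 0
      linarith [h0]
  · have : ∀ᶠ y in nhds s, 0 < deriv f y :=
      (continuousAt_const (y := (0:ℝ))).eventually_lt hdc.continuousAt hpos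
    rcases Metric.eventually_nhds_iff_ball.mp this with ⟨ε, hε, hball⟩
    have hmono : StrictMonoOn f (Set.Ioo (s - ε) (s + ε)) := by
      refine strictMonoOn_of_deriv_pos (convex_Ioo _ _) (hf.continuous.continuousOn) ?_
      intro y hy
      rw [interior_Ioo] at hy
      exact hball y (by rwa [Real.ball_eq_Ioo])
    have hsmem : s ∈ Set.Ioo (s - ε) (s + ε) := by constructor <;> linarith
    refine ⟨ε, hε, Or.inl ⟨?_, ?_⟩⟩
    · intro y hy
      have h1 : f y < f s := hmono ⟨hy.1, lt_trans hy.2 (by linarith)⟩ hsmem hy.2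
      show f y - x < 0
      linarith [h0]
    · intro y hy
      have h1 : f s < f y := hmono hsmem ⟨lt_trans (by linarith) hy.1, hy.2⟩ hy.1
      show 0 < f y - x
      linarith [h0]

/-- For `x` outside the set of critical values of `f_t(y) = y + 2t·u₀(y)`, the fiber
`{y : f_t(y) = x}` is finite with odd cardinality, and `f_t′` does not vanish on it. -/
theorem fiber_finite_odd_card
    (u₀ : ℝ → ℝ) (hu : ContDiff ℝ 1 u₀)
    (hu0 : Tendsto u₀ (cocompact ℝ) (nhds 0))
    (hu0' : Tendsto (deriv u₀) (cocompact ℝ) (nhds 0))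
    (t : ℝ) (x : ℝ)
    (hx : x ∉ (fun y => y + 2 * t * u₀ y) ''
        {y : ℝ | deriv (fun y => y + 2 * t * u₀ y) y = 0}) :
    ({y : ℝ | y + 2 * t * u₀ y = x}.Finite ∧
      Odd ({y : ℝ | y + 2 * t * u₀ y = x}.ncard)) ∧
    ∀ y ∈ {y : ℝ | y + 2 * t * u₀ y = x},
      deriv (fun y => y + 2 * t * u₀ y) y ≠ 0 := by
  set f : ℝ → ℝ := fun y => y + 2 * t * u₀ y with hfdef
  set g : ℝ → ℝ := fun y => f y - x with hgdef
  set F : Set ℝ := {y : ℝ | y + 2 * t * u₀ y = x} with hFdef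
  have hf : ContDiff ℝ 1 f := contDiff_id.add (contDiff_const.mul hu)
  have hFf : ∀ y, y ∈ F ↔ f y = x := fun y => Iff.rfl
  -- derivative nonvanishing on the fiber
  have hdne : ∀ y ∈ F, deriv f y ≠ 0 := by
    intro y hy h
    exact hx ⟨y, h, hy⟩
  -- uniform bound on the perturbation
  obtain ⟨B, hB1, hB⟩ : ∃ B : ℝ, 1 ≤ B ∧ ∀ y, |2 * t * u₀ y| ≤ B := by
    have hw : Tendsto (fun y => 2 * t * u₀ y) (cocompact ℝ) (nhds 0) := by
      have := hu0.const_mul (2 * t)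
      simpa using this
    have hev : ∀ᶠ y in cocompact ℝ, dist (2 * t * u₀ y) 0 < 1 :=
      Metric.tendsto_nhds.mp hw 1 one_pos
    rcases (hasBasis_cocompact.eventually_iff).mp hev with ⟨K, hK, hKev⟩
    obtain ⟨C, hC⟩ := hK.exists_bound_of_continuousOn
      ((continuous_const.mul hu.continuous).continuousOn)
    refine ⟨max (max C 1) 1, le_max_right _ _, ?_⟩
    intro y
    by_cases hyK : y ∈ K
    · calc |2 * t * u₀ y| = ‖2 * t * u₀ y‖ := rfl
        _ ≤ C := hC y hyK
        _ ≤ max (max C 1) 1 := le_trans (le_max_left _ _) (le_max_left _ _)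
    · have := hKev (by simpa using hyK)
      rw [Real.dist_eq, sub_zero] at this
      exact le_trans this.le (le_max_right _ _)
  set a : ℝ := x - B - 1 with hadef
  set b : ℝ := x + B + 1 with hbdef
  have hab : a < b := by rw [hadef, hbdef]; linarith
  have hga : g a < 0 := by
    have := hB a
    have h1 : 2 * t * u₀ a ≤ B := (abs_le.mp this).2
    show a + 2 * t * u₀ a - x < 0
    rw [hadef]; linarith
  have hgb : 0 < g b := by
    have := hB b
    have h1 : -B ≤ 2 * t * u₀ b := (abs_le.mp this).1
    show 0 < b + 2 * t * u₀ b - x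
    rw [hbdef]; linarith
  -- fiber is inside (a, b)
  have hFsub : ∀ y ∈ F, a < y ∧ y < b := by
    intro y hy
    have hyx : y + 2 * t * u₀ y = x := hy
    have h1 := abs_le.mp (hB y)
    constructor
    · rw [hadef]; linarith [h1.2]
    · rw [hbdef]; linarith [h1.1]
  -- zero set of g over [a,b] is exactly the fiber
  have hSF : {y ∈ Set.Icc a b | g y = 0} = F := by
    ext z
    constructor
    · rintro ⟨_, hz0⟩
      have : f z - x = 0 := hz0
      show z + 2 * t * u₀ z = x
      have : f z = x := by linarith
      exact this
    · intro hz
      obtain ⟨h1, h2⟩ := hFsub z hz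
      refine ⟨⟨h1.le, h2.le⟩, ?_⟩
      show f z - x = 0
      have : f z = x := hz
      linarith
  -- transversal crossings
  have hflipF : ∀ s ∈ F, Flip g s := by
    intro s hs
    exact flip_of_deriv_ne hf (hs : f s = x) (hdne s hs)
  -- finiteness: the fiber is compact and its points are isolated
  have hFfin : F.Finite := by
    have hclosed : IsClosed F := by
      have : F = f ⁻¹' {x} := rfl
      rw [this]
      exact isClosed_singleton.preimage hf.continuous
    have hbdd : Bornology.IsBounded F := by
      refine (Metric.isBounded_Icc a b).subset ?_
      intro y hy
      obtain ⟨h1, h2⟩ := hFsub y hy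
      exact ⟨h1.le, h2.le⟩
    have hcpt : IsCompact F := Metric.isCompact_of_isClosed_isBounded hclosed hbdd
    have hch : ∀ s : ℝ, ∃ ε : ℝ, 0 < ε ∧
        (s ∈ F → ∀ z ∈ Set.Ioo (s - ε) (s + ε), z ≠ s → g z ≠ 0) := by
      intro s
      by_cases hs : s ∈ F
      · obtain ⟨ε, hε, hfl⟩ := hflipF s hs
        refine ⟨ε, hε, fun _ z hz hzs => ?_⟩
        rcases lt_or_gt_of_ne hzs with hlt | hgt
        · rcases hfl with ⟨hL, _⟩ | ⟨hL, _⟩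
          · exact (hL z ⟨hz.1, hlt⟩).ne
          · exact (hL z ⟨hz.1, hlt⟩).ne'
        · rcases hfl with ⟨_, hR⟩ | ⟨_, hR⟩
          · exact (hR z ⟨hgt, hz.2⟩).ne'
          · exact (hR z ⟨hgt, hz.2⟩).ne
      · exact ⟨1, one_pos, fun h => absurd h hs⟩
    choose ε hεpos hεspec using hch
    obtain ⟨T, hTF, hTcov⟩ := hcpt.elim_nhds_subcover
      (fun s => Set.Ioo (s - ε s) (s + ε s))
      (fun s _ => Ioo_mem_nhds (by linarith [hεpos s]) (by linarith [hεpos s]))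
    refine Set.Finite.subset T.finite_toSet ?_
    intro y hy
    obtain ⟨s, hsT, hyU⟩ := Set.mem_iUnion₂.mp (hTcov hy)
    have hys : y = s := by
      by_contra hne
      have hsF : s ∈ F := hTF s hsT
      have hgy : g y = 0 := by
        show f y - x = 0
        have : f y = x := hy
        linarith
      exact hεspec s hsF y hyU hne hgy
    rw [hys]; exact hsT
  -- odd cardinality via the parity lemma
  have hodd : Odd F.ncard := by
    have hcont : Continuous g := (hf.continuous.sub continuous_const)
    have := parity_of_flips hcont F.ncard a b hab hga.ne hgb.ne' ?_ ?_ ?_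
    · exact this.mp (mul_neg_of_neg_of_pos hga hgb)
    · rw [hSF]; exact hFfin
    · rw [hSF]
    · rw [hSF]; exact hflipF
  exact ⟨⟨hFfin, hodd⟩, hdne⟩
end

section
/- Let u_0 : ℝ → ℝ be continuously differentiable with u_0(y) → 0 and u_0′(y) → 0 as |y| → ∞, let t ∈ ℝ, and let x ∈ ℝ with x ∉ K_t(u_0). If y_0 < y_1 < ⋯ < y_m is the increasing enumeration of the (finite) set {y ∈ ℝ : f_t(y) = x}, then m is even and (−1)^k · f_t′(y_k) > 0 for every k = 0, …, m. -/
open Filter Set Topology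

lemma aux_right_pos {f : ℝ → ℝ} {a d : ℝ} (hd : HasDerivAt f d a) (h0 : 0 < d)
    {b : ℝ} (hab : a < b) : ∃ z ∈ Set.Ioo a b, f a < f z := by
  have ht : Tendsto (slope f a) (𝓝[>] a) (𝓝 d) :=
    (hasDerivAt_iff_tendsto_slope.mp hd).mono_left (nhdsWithin_mono _ fun z hz => hz.ne')
  have h1 : ∀ᶠ z in 𝓝[>] a, 0 < slope f a z := ht.eventually (lt_mem_nhds h0)
  have h2 : Set.Ioo a b ∈ 𝓝[>] a := Ioo_mem_nhdsGT_of_mem ⟨le_rfl, hab⟩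
  obtain ⟨z, hz1, hz2⟩ := (h1.and (eventually_mem_set.mpr h2)).exists
  refine ⟨z, hz2, ?_⟩
  rw [slope_def_field, div_pos_iff] at hz1
  rcases hz1 with ⟨h, _⟩ | ⟨_, h⟩ <;> [linarith; linarith [hz2.1]]

lemma aux_right_neg {f : ℝ → ℝ} {a d : ℝ} (hd : HasDerivAt f d a) (h0 : d < 0)
    {b : ℝ} (hab : a < b) : ∃ z ∈ Set.Ioo a b, f z < f a := by
  have ht : Tendsto (slope f a) (𝓝[>] a) (𝓝 d) :=
    (hasDerivAt_iff_tendsto_slope.mp hd).mono_left (nhdsWithin_mono _ fun z hz => hz.ne')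
  have h1 : ∀ᶠ z in 𝓝[>] a, slope f a z < 0 := ht.eventually (gt_mem_nhds h0)
  have h2 : Set.Ioo a b ∈ 𝓝[>] a := Ioo_mem_nhdsGT_of_mem ⟨le_rfl, hab⟩
  obtain ⟨z, hz1, hz2⟩ := (h1.and (eventually_mem_set.mpr h2)).exists
  refine ⟨z, hz2, ?_⟩
  rw [slope_def_field, div_neg_iff] at hz1
  rcases hz1 with ⟨_, h⟩ | ⟨h, _⟩ <;> [linarith [hz2.1]; linarith]

lemma aux_left_pos {f : ℝ → ℝ} {a d : ℝ} (hd : HasDerivAt f d a) (h0 : 0 < d)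
    {b : ℝ} (hab : b < a) : ∃ z ∈ Set.Ioo b a, f z < f a := by
  have ht : Tendsto (slope f a) (𝓝[<] a) (𝓝 d) :=
    (hasDerivAt_iff_tendsto_slope.mp hd).mono_left (nhdsWithin_mono _ fun z hz => hz.ne)
  have h1 : ∀ᶠ z in 𝓝[<] a, 0 < slope f a z := ht.eventually (lt_mem_nhds h0)
  have h2 : Set.Ioo b a ∈ 𝓝[<] a := Ioo_mem_nhdsLT_of_mem ⟨hab, le_rfl⟩
  obtain ⟨z, hz1, hz2⟩ := (h1.and (eventually_mem_set.mpr h2)).exists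
  refine ⟨z, hz2, ?_⟩
  rw [slope_def_field, div_pos_iff] at hz1
  rcases hz1 with ⟨_, h⟩ | ⟨h, _⟩ <;> [linarith [hz2.2]; linarith]

lemma aux_left_neg {f : ℝ → ℝ} {a d : ℝ} (hd : HasDerivAt f d a) (h0 : d < 0)
    {b : ℝ} (hab : b < a) : ∃ z ∈ Set.Ioo b a, f a < f z := by
  have ht : Tendsto (slope f a) (𝓝[<] a) (𝓝 d) :=
    (hasDerivAt_iff_tendsto_slope.mp hd).mono_left (nhdsWithin_mono _ fun z hz => hz.ne)
  have h1 : ∀ᶠ z in 𝓝[<] a, slope f a z < 0 := ht.eventually (gt_mem_nhds h0)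
  have h2 : Set.Ioo b a ∈ 𝓝[<] a := Ioo_mem_nhdsLT_of_mem ⟨hab, le_rfl⟩
  obtain ⟨z, hz1, hz2⟩ := (h1.and (eventually_mem_set.mpr h2)).exists
  refine ⟨z, hz2, ?_⟩
  rw [slope_def_field, div_neg_iff] at hz1
  rcases hz1 with ⟨h, _⟩ | ⟨_, h⟩ <;> [linarith; linarith [hz2.2]]

/-- Between two consecutive roots, the derivative signs must be opposite. -/
lemma aux_alternate {f : ℝ → ℝ} (hc : Continuous f) {a b da db x : ℝ}
    (hda : HasDerivAt f da a) (hdb : HasDerivAt f db b)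
    (hfa : f a = x) (hfb : f b = x) (hab : a < b)
    (hno : ∀ z ∈ Set.Ioo a b, f z ≠ x)
    (hda0 : da ≠ 0) (hdb0 : db ≠ 0) : da * db < 0 := by
  rcases hda0.lt_or_gt with h1 | h1 <;> rcases hdb0.lt_or_gt with h2 | h2
  · exfalso
    obtain ⟨z, hz, hfz⟩ := aux_right_neg hda h1 hab
    obtain ⟨w, hw, hfw⟩ := aux_left_neg hdb h2 hz.2
    obtain ⟨c, hc1, hc2⟩ := intermediate_value_Ioo (le_of_lt hw.1) hc.continuousOn
      (show x ∈ Set.Ioo (f z) (f w) from ⟨by rwa [hfa] at hfz, by rwa [hfb] at hfw⟩)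
    exact hno c ⟨lt_trans hz.1 hc1.1, lt_trans hc1.2 hw.2⟩ hc2
  · exact mul_neg_of_neg_of_pos h1 h2
  · exact mul_neg_of_pos_of_neg h1 h2
  · exfalso
    obtain ⟨z, hz, hfz⟩ := aux_right_pos hda h1 hab
    obtain ⟨w, hw, hfw⟩ := aux_left_pos hdb h2 hz.2
    obtain ⟨c, hc1, hc2⟩ := intermediate_value_Ioo' (le_of_lt hw.1) hc.continuousOn
      (show x ∈ Set.Ioo (f w) (f z) from ⟨by rwa [hfb] at hfw, by rwa [hfa] at hfz⟩)
    exact hno c ⟨lt_trans hz.1 hc1.1, lt_trans hc1.2 hw.2⟩ hc2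

/-- At the smallest root the derivative is positive. -/
lemma aux_first {f : ℝ → ℝ} (hc : Continuous f) {a da x p : ℝ}
    (hda : HasDerivAt f da a) (hfa : f a = x)
    (hp : p < a) (hfp : f p < x)
    (hno : ∀ z, f z = x → a ≤ z)
    (hda0 : da ≠ 0) : 0 < da := by
  rcases hda0.lt_or_gt with h1 | h1
  · exfalso
    obtain ⟨z, hz, hfz⟩ := aux_left_neg hda h1 hp
    obtain ⟨c, hc1, hc2⟩ := intermediate_value_Ioo (le_of_lt hz.1) hc.continuousOn
      (show x ∈ Set.Ioo (f p) (f z) from ⟨hfp, by rwa [hfa] at hfz⟩)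
    exact absurd (hno c hc2) (not_le.mpr (lt_trans hc1.2 hz.2))
  · exact h1

/-- At the largest root the derivative is positive. -/
lemma aux_last {f : ℝ → ℝ} (hc : Continuous f) {b db x q : ℝ}
    (hdb : HasDerivAt f db b) (hfb : f b = x)
    (hq : b < q) (hfq : x < f q)
    (hno : ∀ z, f z = x → z ≤ b)
    (hdb0 : db ≠ 0) : 0 < db := by
  rcases hdb0.lt_or_gt with h1 | h1
  · exfalso
    obtain ⟨w, hw, hfw⟩ := aux_right_neg hdb h1 hq
    obtain ⟨c, hc1, hc2⟩ := intermediate_value_Ioo (le_of_lt hw.2) hc.continuousOn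
      (show x ∈ Set.Ioo (f w) (f q) from ⟨by rwa [hfb] at hfw, hfq⟩)
    exact absurd (hno c hc2) (not_le.mpr (lt_trans hw.1 hc1.1))
  · exact h1

/-- If `y 0 < y 1 < ⋯ < y m` enumerates the fiber `{y : f_t(y) = x}` with `x` a regular
value of `f_t(y) = y + 2t·u₀(y)`, then `m` is even and `(−1)^k · f_t′(y k) > 0` for
every `k`. -/
theorem fiber_alternating_derivative_signs
    (u₀ : ℝ → ℝ) (hu : ContDiff ℝ 1 u₀)
    (hu0 : Tendsto u₀ (cocompact ℝ) (nhds 0))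
    (hu0' : Tendsto (deriv u₀) (cocompact ℝ) (nhds 0))
    (t : ℝ) (x : ℝ)
    (hx : x ∉ (fun y => y + 2 * t * u₀ y) ''
        {y : ℝ | deriv (fun y => y + 2 * t * u₀ y) y = 0})
    (m : ℕ) (y : Fin (m + 1) → ℝ) (hmono : StrictMono y)
    (hrange : Set.range y = {y : ℝ | y + 2 * t * u₀ y = x}) :
    Even m ∧
      ∀ k : Fin (m + 1),
        0 < (-1 : ℝ) ^ (k : ℕ) * deriv (fun y => y + 2 * t * u₀ y) (y k) := by
  set f : ℝ → ℝ := fun y => y + 2 * t * u₀ y with hf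
  have hcont : Continuous f := continuous_id.add (continuous_const.mul hu.continuous)
  have hdiff : ∀ z, HasDerivAt f (1 + 2 * t * deriv u₀ z) z := fun z =>
    (hasDerivAt_id z).add (((hu.differentiable one_ne_zero z).hasDerivAt).const_mul (2 * t))
  have hD : ∀ z, HasDerivAt f (deriv f z) z := fun z => by
    rw [(hdiff z).deriv]; exact hdiff z
  -- every y k is a root
  have hfy : ∀ k, f (y k) = x := fun k => by
    have : y k ∈ Set.range y := Set.mem_range_self k
    rw [hrange] at this; exact this
  -- roots are exactly the y k
  have hroot : ∀ z, f z = x → ∃ k, y k = z := fun z hz => by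
    have : z ∈ Set.range y := by rw [hrange]; exact hz
    exact this
  -- derivative is nonzero at each y k
  have hne : ∀ k, deriv f (y k) ≠ 0 := fun k h => hx ⟨y k, h, hfy k⟩
  -- f tends to ±∞
  have hcoc : Tendsto (fun z => 2 * t * u₀ z) (cocompact ℝ) (𝓝 0) := by
    have := hu0.const_mul (2 * t); simpa using this
  have hle_top : (atTop : Filter ℝ) ≤ cocompact ℝ := by
    rw [cocompact_eq_atBot_atTop]; exact le_sup_right
  have hle_bot : (atBot : Filter ℝ) ≤ cocompact ℝ := by
    rw [cocompact_eq_atBot_atTop]; exact le_sup_left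
  have htop : Tendsto f atTop atTop := by
    refine tendsto_atTop_add_right_of_le' (f := fun z : ℝ => z)
      (g := fun z => 2 * t * u₀ z) atTop (-1) tendsto_id ?_
    exact ((hcoc.mono_left hle_top).eventually (lt_mem_nhds (by norm_num : (-1:ℝ) < 0))).mono
      fun z h => le_of_lt h
  have hbot : Tendsto f atBot atBot := by
    refine tendsto_atBot_add_right_of_ge' (f := fun z : ℝ => z)
      (g := fun z => 2 * t * u₀ z) atBot 1 tendsto_id ?_
    exact ((hcoc.mono_left hle_bot).eventually (gt_mem_nhds (by norm_num : (0:ℝ) < 1))).mono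
      fun z h => le_of_lt h
  -- pick p < y 0 with f p < x
  obtain ⟨p, hp1, hp2⟩ : ∃ p, p < y 0 ∧ f p < x := by
    have h1 : ∀ᶠ z in atBot, f z < x := hbot.eventually (eventually_lt_atBot x)
    have h2 : ∀ᶠ z in (atBot : Filter ℝ), z < y 0 := eventually_lt_atBot (y 0)
    obtain ⟨p, hb, ha⟩ := (h2.and h1).exists
    exact ⟨p, hb, ha⟩
  obtain ⟨q, hq1, hq2⟩ : ∃ q, y (Fin.last m) < q ∧ x < f q := by
    have h1 : ∀ᶠ z in atTop, x < f z := htop.eventually (eventually_gt_atTop x)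
    have h2 : ∀ᶠ z in (atTop : Filter ℝ), y (Fin.last m) < z := eventually_gt_atTop _
    obtain ⟨q, hb, ha⟩ := (h2.and h1).exists
    exact ⟨q, hb, ha⟩
  -- first derivative positive
  have hfirst : 0 < deriv f (y 0) := by
    refine aux_first hcont (hD (y 0)) (hfy 0) hp1 hp2 ?_ (hne 0)
    intro z hz
    obtain ⟨k, hk⟩ := hroot z hz
    rw [← hk]; exact hmono.monotone (Fin.zero_le k)
  have hlast : 0 < deriv f (y (Fin.last m)) := by
    refine aux_last hcont (hD _) (hfy _) hq1 hq2 ?_ (hne _)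
    intro z hz
    obtain ⟨k, hk⟩ := hroot z hz
    rw [← hk]; exact hmono.monotone (Fin.le_last k)
  -- alternation
  have halt : ∀ k : ℕ, (hk : k < m) →
      deriv f (y ⟨k, by omega⟩) * deriv f (y ⟨k + 1, by omega⟩) < 0 := by
    intro k hk
    have hlt : y ⟨k, by omega⟩ < y ⟨k + 1, by omega⟩ := hmono (by simp [Fin.lt_def])
    refine aux_alternate hcont (hD _) (hD _) (hfy _) (hfy _) hlt ?_ (hne _) (hne _)
    intro z hz hfz
    obtain ⟨j, hj⟩ := hroot z hfz
    rw [← hj] at hz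
    have h1 : (⟨k, by omega⟩ : Fin (m + 1)) < j := hmono.lt_iff_lt.mp hz.1
    have h2 : j < (⟨k + 1, by omega⟩ : Fin (m + 1)) := hmono.lt_iff_lt.mp hz.2
    rw [Fin.lt_def] at h1 h2
    simp at h1 h2
    omega
  have hsign : ∀ k : ℕ, (hk : k ≤ m) → 0 < (-1 : ℝ) ^ k * deriv f (y ⟨k, by omega⟩) := by
    intro k
    induction k with
    | zero => intro _; simpa using hfirst
    | succ n ih =>
      intro hk
      have h1 := ih (by omega)
      have h2 := halt n (by omega)
      have hp : ((-1 : ℝ)) ^ (n + 1) = -((-1 : ℝ) ^ n) := by ring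
      rw [hp]
      rcases Nat.even_or_odd n with he | ho
      · rw [he.neg_one_pow] at h1 ⊢; nlinarith
      · rw [ho.neg_one_pow] at h1 ⊢; nlinarith
  constructor
  · have h1 := hsign m le_rfl
    have : y (⟨m, by omega⟩ : Fin (m + 1)) = y (Fin.last m) := rfl
    rw [this] at h1
    rcases Nat.even_or_odd m with he | ho
    · exact he
    · rw [ho.neg_one_pow] at h1; nlinarith
  · intro k
    have := hsign k.1 (by omega)
    simpa [Fin.eta] using this
end

section
/- Let u_0 : ℝ → ℝ be continuously differentiable with u_0(y) → 0 and u_0′(y) → 0 as |y| → ∞, and let t ∈ ℝ. Then the function x ↦ (number of solutions y of f_t(y) = x) is locally constant on the open set ℝ \ K_t(u_0); in particular it is constant on every connected component of ℝ \ K_t(u_0). -/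
open Filter Set

lemma local_inverse_pos {f : ℝ → ℝ} (hf : Continuous f)
    (hd' : Continuous (deriv f)) {y₀ : ℝ} (h : 0 < deriv f y₀) {ε : ℝ} (hε : 0 < ε) :
    ∃ δ, 0 < δ ∧ δ ≤ ε ∧ ∃ V, IsOpen V ∧ f y₀ ∈ V ∧
      ∀ x ∈ V, ∃! y, y ∈ Set.Ioo (y₀ - δ) (y₀ + δ) ∧ f y = x := by
  obtain ⟨δ', hδ', hball⟩ := Metric.continuousAt_iff.1 hd'.continuousAt (deriv f y₀) h
  set δ := min (δ' / 2) ε with hδdef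
  have hδpos : 0 < δ := lt_min (by linarith) hε
  have hδε : δ ≤ ε := min_le_right _ _
  have hpos : ∀ z ∈ Set.Icc (y₀ - δ) (y₀ + δ), 0 < deriv f z := by
    intro z hz
    have : dist z y₀ < δ' := by
      rw [Real.dist_eq]
      have h1 := hz.1; have h2 := hz.2
      have : |z - y₀| ≤ δ := abs_sub_le_iff.2 ⟨by linarith, by linarith⟩
      have : δ ≤ δ' / 2 := min_le_left _ _
      linarith [abs_sub_le_iff.2 (⟨by linarith [hz.1, hz.2], by linarith [hz.1, hz.2]⟩ :
        z - y₀ ≤ δ ∧ y₀ - z ≤ δ)]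
    have := hball this
    rw [Real.dist_eq, abs_sub_lt_iff] at this
    linarith [this.2]
  have hmono : StrictMonoOn f (Set.Icc (y₀ - δ) (y₀ + δ)) := by
    apply strictMonoOn_of_deriv_pos (convex_Icc _ _) hf.continuousOn
    intro z hz
    rw [interior_Icc] at hz
    exact hpos z (Set.Ioo_subset_Icc_self hz)
  have hmem : y₀ ∈ Set.Icc (y₀ - δ) (y₀ + δ) := by constructor <;> linarith
  have hlt1 : f (y₀ - δ) < f y₀ :=
    hmono (by constructor <;> linarith) hmem (by linarith)
  have hlt2 : f y₀ < f (y₀ + δ) :=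
    hmono hmem (by constructor <;> linarith) (by linarith)
  refine ⟨δ, hδpos, hδε, Set.Ioo (f (y₀ - δ)) (f (y₀ + δ)), isOpen_Ioo, ⟨hlt1, hlt2⟩, ?_⟩
  intro x hx
  obtain ⟨y, hy, hfy⟩ := intermediate_value_Ioo (by linarith : y₀ - δ ≤ y₀ + δ)
    hf.continuousOn hx
  refine ⟨y, ⟨hy, hfy⟩, ?_⟩
  rintro z ⟨hz, hfz⟩
  exact hmono.injOn (Set.Ioo_subset_Icc_self hz) (Set.Ioo_subset_Icc_self hy)
    (by rw [hfz, hfy])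

lemma local_inverse {f : ℝ → ℝ} (hf : Continuous f)
    (hd' : Continuous (deriv f)) {y₀ : ℝ} (h : deriv f y₀ ≠ 0) {ε : ℝ} (hε : 0 < ε) :
    ∃ δ, 0 < δ ∧ δ ≤ ε ∧ ∃ V, IsOpen V ∧ f y₀ ∈ V ∧
      ∀ x ∈ V, ∃! y, y ∈ Set.Ioo (y₀ - δ) (y₀ + δ) ∧ f y = x := by
  rcases h.lt_or_gt with hneg | hpos
  · have hderiv : deriv (fun z => -f z) = fun z => -deriv f z := by
      funext z; exact deriv.fun_neg
    have hd'' : Continuous (deriv (fun z => -f z)) := by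
      rw [hderiv]; exact hd'.neg
    have hp : 0 < deriv (fun z => -f z) y₀ := by
      rw [hderiv]; simpa using hneg
    obtain ⟨δ, hδ, hδε, V, hVo, hVm, hV⟩ := local_inverse_pos hf.neg hd'' hp hε
    refine ⟨δ, hδ, hδε, (fun x => -x) ⁻¹' V, hVo.preimage continuous_neg, hVm, ?_⟩
    intro x hx
    obtain ⟨y, ⟨hy, hfy⟩, huniq⟩ := hV (-x) hx
    refine ⟨y, ⟨hy, by linarith [neg_eq_iff_eq_neg.1 hfy]⟩, ?_⟩
    rintro z ⟨hz, hfz⟩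
    exact huniq z ⟨hz, by rw [Pi.neg_apply, hfz]⟩
  · exact local_inverse_pos hf hd' hpos hε

lemma Ioo_disj {a b da db : ℝ} (h : da + db ≤ |a - b|) :
    Set.Ioo (a - da) (a + da) ∩ Set.Ioo (b - db) (b + db) = ∅ := by
  ext z
  simp only [Set.mem_inter_iff, Set.mem_Ioo, Set.mem_empty_iff_false, iff_false]
  rintro ⟨⟨h1, h2⟩, ⟨h3, h4⟩⟩
  rcases abs_cases (a - b) with ⟨he, _⟩ | ⟨he, _⟩ <;> rw [he] at h <;> linarith

lemma fiber_count_eventually_const {f : ℝ → ℝ} (hf : Continuous f)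
    (hd' : Continuous (deriv f))
    (hprop : Tendsto f (cocompact ℝ) (cocompact ℝ))
    {x₀ : ℝ} (hx₀ : x₀ ∉ f '' {y | deriv f y = 0}) :
    ∀ᶠ x in nhds x₀, {y | f y = x}.ncard = {y | f y = x₀}.ncard := by
  have hproper : IsProperMap f := isProperMap_iff_tendsto_cocompact.2 ⟨hf, hprop⟩
  set S₀ : Set ℝ := {y | f y = x₀} with hS₀def
  have hS₀c : IsCompact S₀ := by
    have : S₀ = f ⁻¹' {x₀} := rfl
    rw [this]; exact hproper.isCompact_preimage isCompact_singleton
  have hcrit : ∀ y ∈ S₀, deriv f y ≠ 0 := by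
    intro y hy h0
    exact hx₀ ⟨y, h0, hy⟩
  -- solutions set is finite
  have hfin : S₀.Finite := by
    refine hS₀c.finite (isDiscrete_iff_nhdsNE.2 fun y hy => ?_)
    obtain ⟨δ, hδ1, _, V, hVo, hVm, hVu⟩ :=
      local_inverse hf hd' (hcrit y hy) (one_pos)
    have hx₀V : x₀ ∈ V := by rwa [show f y = x₀ from hy] at hVm
    obtain ⟨z, hz, huniq⟩ := hVu x₀ hx₀V
    have hyz : y = z := huniq y ⟨⟨by linarith, by linarith⟩, hy⟩
    rw [← Filter.empty_mem_iff_bot]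
    have hmem : {y}ᶜ ∩ Set.Ioo (y - δ) (y + δ) ∈ nhdsWithin y {y}ᶜ :=
      inter_mem_nhdsWithin _ (Ioo_mem_nhds (by linarith) (by linarith))
    have := Filter.inter_mem_inf hmem (Filter.mem_principal_self S₀)
    have heq : {y}ᶜ ∩ Set.Ioo (y - δ) (y + δ) ∩ S₀ = ∅ := by
      ext w
      simp only [Set.mem_inter_iff, Set.mem_compl_iff, Set.mem_singleton_iff,
        Set.mem_empty_iff_false, iff_false, not_and]
      rintro ⟨hw2, hw1⟩ hw3
      exact hw2 (by rw [huniq w ⟨hw1, hw3⟩, ← hyz])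
    rwa [heq] at this
  -- a uniform separation constant
  obtain ⟨ε, hεpos, hsep⟩ : ∃ ε > 0, ∀ a ∈ S₀, ∀ b ∈ S₀, a ≠ b → 2 * ε ≤ |a - b| := by
    set D : Set (ℝ × ℝ) := (S₀ ×ˢ S₀) ∩ {p | p.1 ≠ p.2} with hDdef
    have hDfin : D.Finite := (hfin.prod hfin).subset Set.inter_subset_left
    rcases D.eq_empty_or_nonempty with hD | hD
    · refine ⟨1, one_pos, fun a ha b hb hab => ?_⟩
      have : (a, b) ∈ D := ⟨⟨ha, hb⟩, hab⟩
      rw [hD] at this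
      exact absurd this (Set.notMem_empty _)
    · obtain ⟨p, hp, hmin⟩ := Set.exists_min_image D (fun p => |p.1 - p.2|) hDfin hD
      refine ⟨|p.1 - p.2| / 2, by
        have : p.1 ≠ p.2 := hp.2
        have : p.1 - p.2 ≠ 0 := sub_ne_zero.2 this
        positivity, fun a ha b hb hab => ?_⟩
      have := hmin (a, b) ⟨⟨ha, hb⟩, hab⟩
      simpa using by linarith
  -- local inverse data at each solution
  have H : ∀ y, y ∈ S₀ → ∃ δ, (0 < δ ∧ δ ≤ ε) ∧ ∃ V, IsOpen V ∧ x₀ ∈ V ∧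
      ∀ x ∈ V, ∃! z, z ∈ Set.Ioo (y - δ) (y + δ) ∧ f z = x := by
    intro y hy
    obtain ⟨δ, h1, h2, V, h3, h4, h5⟩ := local_inverse hf hd' (hcrit y hy) hεpos
    exact ⟨δ, ⟨h1, h2⟩, V, h3, by rwa [show f y = x₀ from hy] at h4, h5⟩
  choose! δ hδ V hVo hVm hV using H
  -- intervals around distinct solutions are disjoint
  have hdisj : ∀ a ∈ S₀, ∀ b ∈ S₀, a ≠ b →
      Set.Ioo (a - δ a) (a + δ a) ∩ Set.Ioo (b - δ b) (b + δ b) = ∅ := by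
    intro a ha b hb hab
    exact Ioo_disj (by linarith [(hδ a ha).2, (hδ b hb).2, hsep a ha b hb hab])
  set U : Set ℝ := ⋃ y ∈ S₀, Set.Ioo (y - δ y) (y + δ y) with hUdef
  have hUopen : IsOpen U := isOpen_biUnion fun y _ => isOpen_Ioo
  -- a neighborhood whose preimage lies in U
  obtain ⟨W, hWnhds, hWsub⟩ : ∃ W ∈ nhds x₀, ∀ z, f z ∈ W → z ∈ U := by
    set T : Set ℝ := f ⁻¹' (Metric.closedBall x₀ 1) \ U with hTdef
    have hTc : IsCompact T :=
      (hproper.isCompact_preimage (isCompact_closedBall _ _)).diff hUopen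
    have hx₀T : x₀ ∉ f '' T := by
      rintro ⟨z, ⟨hz1, hz2⟩, hz3⟩
      have hzS : z ∈ S₀ := hz3
      exact hz2 (Set.mem_biUnion hzS ⟨by linarith [(hδ z hzS).1], by linarith [(hδ z hzS).1]⟩)
    have hclosed : IsClosed (f '' T) := (hTc.image hf).isClosed
    obtain ⟨ε', hε'pos, hball⟩ :=
      Metric.isOpen_iff.1 hclosed.isOpen_compl x₀ hx₀T
    refine ⟨Metric.ball x₀ (min ε' 1), Metric.ball_mem_nhds _ (lt_min hε'pos one_pos), ?_⟩
    intro z hz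
    by_contra hzU
    have hzT : z ∈ T := by
      refine ⟨?_, hzU⟩
      have : dist (f z) x₀ < min ε' 1 := hz
      exact Metric.mem_closedBall.2 (le_of_lt (lt_of_lt_of_le this (min_le_right _ _)))
    have hzb : f z ∈ Metric.ball x₀ ε' :=
      Metric.mem_ball.2 (lt_of_lt_of_le (Metric.mem_ball.1 hz) (min_le_left _ _))
    have : f z ∈ (f '' T)ᶜ := hball hzb
    exact this ⟨z, hzT, rfl⟩
  -- the full neighborhood
  have hN : W ∩ ⋂ y ∈ hfin.toFinset, V y ∈ nhds x₀ := by
    refine inter_mem hWnhds ?_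
    refine (Filter.biInter_finset_mem _).2 fun y hy => ?_
    exact (hVo y (hfin.mem_toFinset.1 hy)).mem_nhds (hVm y (hfin.mem_toFinset.1 hy))
  filter_upwards [hN] with x hx
  obtain ⟨hxW, hxV⟩ := hx
  rw [Set.mem_iInter₂] at hxV
  have key : ∀ y, y ∈ S₀ → ∃ z, (z ∈ Set.Ioo (y - δ y) (y + δ y) ∧ f z = x) ∧
      ∀ w, (w ∈ Set.Ioo (y - δ y) (y + δ y) ∧ f w = x) → w = z := by
    intro y hy
    exact hV y hy x (hxV y (hfin.mem_toFinset.2 hy))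
  choose! g hg hguniq using key
  have hbij : Set.BijOn g S₀ {z | f z = x} := by
    refine ⟨fun y hy => (hg y hy).2, ?_, ?_⟩
    · intro a ha b hb hab
      by_contra hne
      have hmem : g a ∈ Set.Ioo (a - δ a) (a + δ a) ∩ Set.Ioo (b - δ b) (b + δ b) :=
        ⟨(hg a ha).1, hab ▸ (hg b hb).1⟩
      rw [hdisj a ha b hb hne] at hmem
      exact hmem
    · intro z hz
      have hzU : z ∈ U := hWsub z (by rwa [show f z = x from hz])
      rw [hUdef, Set.mem_iUnion₂] at hzU
      obtain ⟨y, hy, hzy⟩ := hzU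
      exact ⟨y, hy, (hguniq y hy z ⟨hzy, hz⟩).symm⟩
  calc {z | f z = x}.ncard = (g '' S₀).ncard := by rw [hbij.image_eq]
    _ = S₀.ncard := Set.ncard_image_of_injOn hbij.injOn

lemma proper_of_perturb {g : ℝ → ℝ} (hg : Tendsto g (cocompact ℝ) (nhds 0)) :
    Tendsto (fun y => y + g y) (cocompact ℝ) (cocompact ℝ) := by
  rw [cocompact_eq_atBot_atTop]
  have hT : Tendsto g atTop (nhds 0) :=
    hg.mono_left (by rw [cocompact_eq_atBot_atTop]; exact le_sup_right)
  have hB : Tendsto g atBot (nhds 0) :=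
    hg.mono_left (by rw [cocompact_eq_atBot_atTop]; exact le_sup_left)
  refine Tendsto.sup ?_ ?_
  · -- atBot → atBot
    refine Tendsto.mono_right ?_ le_sup_left
    have h1 : ∀ᶠ y in atBot, y + g y ≤ y + 1 := by
      filter_upwards [hB.eventually (eventually_lt_nhds one_pos)] with y hy
      linarith
    exact tendsto_atBot_mono' _ h1 (tendsto_atBot_add_const_right _ _ tendsto_id)
  · refine Tendsto.mono_right ?_ le_sup_right
    have h1 : ∀ᶠ y in atTop, y - 1 ≤ y + g y := by
      filter_upwards [hT.eventually (eventually_gt_nhds (by norm_num : (-1:ℝ) < 0))] with y hy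
      linarith
    exact tendsto_atTop_mono' _ h1 (tendsto_atTop_add_const_right _ _ tendsto_id)

/-- The number of solutions of `y + 2t·u₀(y) = x` is locally constant on the complement
of the set of critical values of `f_t`, hence constant on each of its connected
components. -/
theorem number_of_solutions_locally_constant
    (u₀ : ℝ → ℝ) (hu : ContDiff ℝ 1 u₀)
    (hu0 : Tendsto u₀ (cocompact ℝ) (nhds 0))
    (hu0' : Tendsto (deriv u₀) (cocompact ℝ) (nhds 0))
    (t : ℝ) :
    IsLocallyConstant
      (fun x : (((fun y => y + 2 * t * u₀ y) ''
          {y : ℝ | deriv (fun y => y + 2 * t * u₀ y) y = 0})ᶜ : Set ℝ) =>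
        {y : ℝ | y + 2 * t * u₀ y = (x : ℝ)}.ncard) ∧
    ∀ C : Set ℝ,
      C ⊆ ((fun y => y + 2 * t * u₀ y) ''
          {y : ℝ | deriv (fun y => y + 2 * t * u₀ y) y = 0})ᶜ →
      IsConnected C →
      ∀ x₁ ∈ C, ∀ x₂ ∈ C,
        {y : ℝ | y + 2 * t * u₀ y = x₁}.ncard
          = {y : ℝ | y + 2 * t * u₀ y = x₂}.ncard := by
  have hud : Differentiable ℝ u₀ := hu.differentiable one_ne_zero
  have hfc : Continuous (fun y : ℝ => y + 2 * t * u₀ y) :=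
    continuous_id.add (continuous_const.mul hu.continuous)
  have hderiv : deriv (fun y : ℝ => y + 2 * t * u₀ y) =
      fun y => 1 + 2 * t * deriv u₀ y := by
    funext y
    rw [deriv_fun_add differentiableAt_fun_id ((hud y).const_mul _), deriv_id'',
      deriv_const_mul _ (hud y)]
  have hd' : Continuous (deriv (fun y : ℝ => y + 2 * t * u₀ y)) := by
    rw [hderiv]
    exact continuous_const.add (continuous_const.mul (hu.continuous_deriv le_rfl))
  have hprop : Tendsto (fun y : ℝ => y + 2 * t * u₀ y) (cocompact ℝ) (cocompact ℝ) := by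
    apply proper_of_perturb
    have := hu0.const_mul (2 * t)
    simpa using this
  have hlc : IsLocallyConstant
      (fun x : (((fun y => y + 2 * t * u₀ y) ''
          {y : ℝ | deriv (fun y => y + 2 * t * u₀ y) y = 0})ᶜ : Set ℝ) =>
        {y : ℝ | y + 2 * t * u₀ y = (x : ℝ)}.ncard) := by
    rw [IsLocallyConstant.iff_eventually_eq]
    intro x
    have h := fiber_count_eventually_const hfc hd' hprop x.prop
    exact continuousAt_subtype_val.eventually h
  refine ⟨hlc, ?_⟩
  intro C hCsub hCconn x₁ hx₁ x₂ hx₂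
  set K := ((fun y => y + 2 * t * u₀ y) ''
      {y : ℝ | deriv (fun y => y + 2 * t * u₀ y) y = 0}) with hK
  have hs : IsPreconnected ((Subtype.val : ↥(Kᶜ) → ℝ) ⁻¹' C) := by
    rw [← Topology.IsInducing.subtypeVal.isPreconnected_image]
    have : (Subtype.val : ↥(Kᶜ) → ℝ) '' (Subtype.val ⁻¹' C) = C := by
      rw [Subtype.image_preimage_coe]
      exact Set.inter_eq_self_of_subset_right hCsub
    rw [this]
    exact hCconn.isPreconnected
  exact hlc.apply_eq_of_isPreconnected hs (x := ⟨x₁, hCsub hx₁⟩) (y := ⟨x₂, hCsub hx₂⟩)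
    hx₁ hx₂
end

section
/- Let g : ℝ → ℝ be continuously differentiable with g(y) → 0 as y → ±∞, and let φ : ℝ → ℝ be continuous with compact support. Then ∫_ℝ φ(y + g(y))·(1 + g′(y)) dy = ∫_ℝ φ(s) ds. -/
open Filter MeasureTheory

/-- Change of variables `s = y + g(y)` for a compactly supported continuous test
function: `∫ φ(y + g(y))(1 + g′(y)) dy = ∫ φ(s) ds`. -/
theorem change_of_variables_identity
    (g : ℝ → ℝ) (hg : ContDiff ℝ 1 g)
    (hg0 : Tendsto g (cocompact ℝ) (nhds 0))
    (φ : ℝ → ℝ) (hφ : Continuous φ) (hφc : HasCompactSupport φ) :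
    ∫ y : ℝ, φ (y + g y) * (1 + deriv g y) = ∫ s : ℝ, φ s := by
  -- the map u(y) = y + g(y)
  set u : ℝ → ℝ := fun y => y + g y with hu
  have hgc : Continuous g := hg.continuous
  have hucont : Continuous u := continuous_id.add hgc
  -- g → 0 along atTop and atBot
  have hcc : cocompact ℝ = atBot ⊔ atTop := cocompact_eq_atBot_atTop
  have hgtop : Tendsto g atTop (nhds 0) := hg0.mono_left (by rw [hcc]; exact le_sup_right)
  have hgbot : Tendsto g atBot (nhds 0) := hg0.mono_left (by rw [hcc]; exact le_sup_left)
  -- u → ±∞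
  have hutop : Tendsto u atTop atTop := by
    apply tendsto_atTop_mono' _ _ (tendsto_atTop_add_const_right _ (-1) tendsto_id)
    filter_upwards [hgtop (Metric.ball_mem_nhds 0 one_pos)] with y hy
    have : |g y| < 1 := by simpa [Real.dist_eq] using hy
    have := abs_lt.1 this
    simp only [u, id_eq]; linarith [this.1]
  have hubot : Tendsto u atBot atBot := by
    apply tendsto_atBot_mono' _ _ (tendsto_atBot_add_const_right _ 1 tendsto_id)
    filter_upwards [hgbot (Metric.ball_mem_nhds 0 one_pos)] with y hy
    have : |g y| < 1 := by simpa [Real.dist_eq] using hy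
    have := abs_lt.1 this
    simp only [u, id_eq]; linarith [this.2]
  have hucc : Tendsto u (cocompact ℝ) (cocompact ℝ) := by
    rw [hcc, tendsto_sup]
    exact ⟨hubot.mono_right le_sup_left, hutop.mono_right le_sup_right⟩
  -- bound for the support of φ
  obtain ⟨r, hr⟩ := hφc.isCompact.isBounded.subset_closedBall 0
  have hφzero : ∀ t : ℝ, r < |t| → φ t = 0 := by
    intro t ht
    by_contra h
    have : t ∈ tsupport φ := subset_tsupport φ h
    have := hr this
    simp only [Metric.mem_closedBall, Real.dist_eq, sub_zero] at this
    linarith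
  set a : ℝ := -(r + 1) with ha
  -- antiderivative
  set F : ℝ → ℝ := fun x => ∫ t in a..x, φ t with hF
  have hFderiv : ∀ x : ℝ, HasDerivAt F (φ x) x := fun x =>
    intervalIntegral.integral_hasDerivAt_right (hφ.intervalIntegrable _ _)
      (hφ.stronglyMeasurableAtFilter _ _) hφ.continuousAt
  -- derivative of F ∘ u
  have huderiv : ∀ y : ℝ, HasDerivAt u (1 + deriv g y) y := fun y =>
    (hasDerivAt_id y).add ((hg.differentiable one_ne_zero y).hasDerivAt)
  have hcomp : ∀ y : ℝ, HasDerivAt (F ∘ u) (φ (u y) * (1 + deriv g y)) y := fun y =>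
    (hFderiv (u y)).comp y (huderiv y)
  -- compact support of the integrand
  have hψcs : HasCompactSupport fun y => φ (u y) := by
    have hev : ∀ᶠ y in cocompact ℝ, u y ∉ tsupport φ := by
      have := hucc hφc.isCompact.compl_mem_cocompact
      simpa [Set.preimage, Set.mem_compl_iff] using this
    obtain ⟨K, hKc, hK⟩ := hasBasis_cocompact.eventually_iff.1 hev
    apply HasCompactSupport.intro hKc
    intro y hy
    exact image_eq_zero_of_notMem_tsupport (hK hy)
  have hcs : HasCompactSupport fun y => φ (u y) * (1 + deriv g y) := hψcs.mul_right
  have hcont : Continuous fun y => φ (u y) * (1 + deriv g y) :=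
    (hφ.comp hucont).mul (continuous_const.add (hg.continuous_deriv le_rfl))
  have hint : Integrable fun y => φ (u y) * (1 + deriv g y) :=
    hcont.integrable_of_hasCompactSupport hcs
  -- limits of F ∘ u
  have hFbot : ∀ x : ℝ, x ≤ a → F x = 0 := by
    intro x hx
    have hzero : Set.EqOn φ 0 (Set.uIcc a x) := by
      intro t ht
      rw [Set.uIcc_comm, Set.uIcc_of_le hx] at ht
      have ht2 : t ≤ a := ht.2
      have : r < |t| := lt_of_lt_of_le (by simp only [ha] at ht2 ⊢; linarith [neg_le_abs t])
        le_rfl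
      simpa using hφzero t this
    simp only [F]
    rw [intervalIntegral.integral_congr hzero]
    simp
  have hFtop : ∀ x : ℝ, r + 1 ≤ x → F x = ∫ s : ℝ, φ s := by
    intro x hx
    apply intervalIntegral.integral_eq_integral_of_support_subset
    intro t ht
    have : t ∈ tsupport φ := subset_tsupport φ ht
    have := hr this
    simp only [Metric.mem_closedBall, Real.dist_eq, sub_zero] at this
    have habs := abs_le.1 this
    constructor
    · simp only [ha]; linarith [habs.1]
    · linarith [habs.2]
  have hbot : Tendsto (F ∘ u) atBot (nhds 0) := by
    apply Tendsto.congr' _ tendsto_const_nhds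
    filter_upwards [hubot.eventually (eventually_le_atBot a)] with y hy
    exact (hFbot _ hy).symm
  have htop : Tendsto (F ∘ u) atTop (nhds (∫ s : ℝ, φ s)) := by
    apply Tendsto.congr' _ tendsto_const_nhds
    filter_upwards [hutop.eventually (eventually_ge_atTop (r + 1))] with y hy
    exact (hFtop _ hy).symm
  have := MeasureTheory.integral_of_hasDerivAt_of_tendsto hcomp hint hbot htop
  simpa [u] using this
end

section
/- Let g : ℝ → ℝ be continuously differentiable with g(y) → 0 as y → ±∞, and let φ : ℝ → ℝ be continuous with compact support. Then ∫_ℝ g′(y)·φ(y + g(y)) dy = ∫_ℝ φ(s) ds − ∫_ℝ φ(y + g(y)) dy. -/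
open Filter MeasureTheory Topology

/-- Integration by parts identity:
`∫ g′(y) φ(y + g(y)) dy = ∫ φ(s) ds − ∫ φ(y + g(y)) dy`. -/
theorem integral_deriv_mul_comp_eq_sub
    (g : ℝ → ℝ) (hg : ContDiff ℝ 1 g)
    (hg0 : Tendsto g (cocompact ℝ) (nhds 0))
    (φ : ℝ → ℝ) (hφ : Continuous φ) (hφc : HasCompactSupport φ) :
    ∫ y : ℝ, deriv g y * φ (y + g y)
      = (∫ s : ℝ, φ s) - ∫ y : ℝ, φ (y + g y) := by
  have hgc : Continuous g := hg.continuous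
  have hg' : Continuous (deriv g) := hg.continuous_deriv le_rfl
  have hcoc : cocompact ℝ = atBot ⊔ atTop := cocompact_eq_atBot_atTop
  have hgt : Tendsto g atTop (𝓝 0) := hg0.mono_left (hcoc ▸ le_sup_right)
  have hgb : Tendsto g atBot (𝓝 0) := hg0.mono_left (hcoc ▸ le_sup_left)
  set u : ℝ → ℝ := fun y => y + g y with hu
  have huc : Continuous u := continuous_id.add hgc
  have hut : Tendsto u atTop atTop := by
    simpa [hu, add_comm] using hgt.add_atTop tendsto_id
  have hub : Tendsto u atBot atBot := by
    simpa [hu, add_comm] using hgb.add_atBot tendsto_id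
  -- compact support of φ ∘ u
  have hsupp : HasCompactSupport (fun y => φ (u y)) := by
    rw [hasCompactSupport_iff_eventuallyEq, Filter.coclosedCompact_eq_cocompact, hcoc]
    rw [Filter.EventuallyEq, Filter.eventually_sup]
    have hout : ∀ x : ℝ, x ∉ tsupport φ → φ x = 0 := fun x hx =>
      image_eq_zero_of_notMem_tsupport hx
    obtain ⟨R, hR⟩ := hφc.isBounded.subset_closedBall 0
    constructor
    · filter_upwards [hub.eventually (eventually_lt_atBot (-R))] with y hy
      refine hout _ fun h => ?_
      have := hR h
      simp only [Metric.mem_closedBall, Real.dist_eq, sub_zero] at this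
      have : -R ≤ u y := neg_le_of_abs_le this
      linarith
    · filter_upwards [hut.eventually (eventually_gt_atTop R)] with y hy
      refine hout _ fun h => ?_
      have := hR h
      simp only [Metric.mem_closedBall, Real.dist_eq, sub_zero] at this
      have : u y ≤ R := le_of_abs_le this
      linarith
  have hφuc : Continuous (fun y => φ (u y)) := hφ.comp huc
  have hint1 : Integrable (fun y => φ (u y)) :=
    hφuc.integrable_of_hasCompactSupport hsupp
  have hsupp2 : HasCompactSupport (fun y => deriv g y * φ (u y)) := hsupp.mul_left
  have hint2 : Integrable (fun y => deriv g y * φ (u y)) :=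
    (hg'.mul hφuc).integrable_of_hasCompactSupport hsupp2
  have hsupp3 : HasCompactSupport (fun y => (1 + deriv g y) * φ (u y)) := hsupp.mul_left
  have hint3 : Integrable (fun y => (1 + deriv g y) * φ (u y)) :=
    (((continuous_const.add hg')).mul hφuc).integrable_of_hasCompactSupport hsupp3
  have hφint : Integrable φ := hφ.integrable_of_hasCompactSupport hφc
  -- FTC on F y = ∫ t in 0..u y, φ t
  set F : ℝ → ℝ := fun y => ∫ t in (0:ℝ)..(u y), φ t with hF
  have hderiv : ∀ y, HasDerivAt F ((1 + deriv g y) * φ (u y)) y := by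
    intro y
    have h1 : HasDerivAt (fun x => ∫ t in (0:ℝ)..x, φ t) (φ (u y)) (u y) :=
      (hφ.integral_hasStrictDerivAt 0 (u y)).hasDerivAt
    have h2 : HasDerivAt u (1 + deriv g y) y :=
      (hasDerivAt_id y).add ((hg.differentiable one_ne_zero y).hasDerivAt)
    rw [mul_comm]; exact h1.comp y h2
  have htopF : Tendsto F atTop (𝓝 (∫ t in Set.Ioi (0:ℝ), φ t)) :=
    intervalIntegral_tendsto_integral_Ioi 0 hφint.integrableOn hut
  have hbotF : Tendsto F atBot (𝓝 (-∫ t in Set.Iic (0:ℝ), φ t)) := by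
    have h := (intervalIntegral_tendsto_integral_Iic 0 hφint.integrableOn hub).neg
    refine h.congr fun y => ?_
    rw [intervalIntegral.integral_symm, neg_neg]
  have key : ∫ y, (1 + deriv g y) * φ (u y)
      = (∫ t in Set.Ioi (0:ℝ), φ t) - (-∫ t in Set.Iic (0:ℝ), φ t) :=
    integral_of_hasDerivAt_of_tendsto hderiv hint3 hbotF htopF
  have hsplit : (∫ t in Set.Iic (0:ℝ), φ t) + (∫ t in Set.Ioi (0:ℝ), φ t) = ∫ s, φ s :=
    intervalIntegral.integral_Iic_add_Ioi hφint.integrableOn hφint.integrableOn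
  have hadd : ∫ y, (1 + deriv g y) * φ (u y)
      = (∫ y, φ (u y)) + ∫ y, deriv g y * φ (u y) := by
    have : (fun y => (1 + deriv g y) * φ (u y))
        = fun y => φ (u y) + deriv g y * φ (u y) := by funext y; ring
    rw [this, integral_add hint1 hint2]
  have : (∫ y, φ (u y)) + ∫ y, deriv g y * φ (u y) = ∫ s, φ s := by
    rw [← hadd, key, sub_neg_eq_add, add_comm, hsplit]
  linarith [this]
end

section
/- Let V ⊆ ℝ² be an open set and let v_0, v_1, v_2 : V → ℝ be differentiable functions each satisfying the inviscid Burgers–Hopf equation ∂_t v_k + ∂_x (v_k²) = 0 on V (k = 0, 1, 2). If the function u := v_0 − v_1 + v_2 also satisfies ∂_t u + ∂_x (u²) = 0 on V, then ∂_x [ (v_1 − v_0)(v_1 − v_2) ] = 0 at every point of V. -/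
/-- If `v₀, v₁, v₂` and their alternating sum `u = v₀ − v₁ + v₂` all solve the inviscid
Burgers–Hopf equation `∂_t v + ∂_x (v²) = 0` on an open set `V ⊆ ℝ²`, then
`∂_x [(v₁ − v₀)(v₁ − v₂)] = 0` on `V`. -/
theorem alternating_sum_burgers_constraint
    (V : Set (ℝ × ℝ)) (hV : IsOpen V)
    (v₀ v₁ v₂ : ℝ → ℝ → ℝ)
    (hdiff₀ : ∀ p ∈ V, DifferentiableAt ℝ (fun t => v₀ t p.2) p.1 ∧
        DifferentiableAt ℝ (fun x => v₀ p.1 x) p.2)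
    (hdiff₁ : ∀ p ∈ V, DifferentiableAt ℝ (fun t => v₁ t p.2) p.1 ∧
        DifferentiableAt ℝ (fun x => v₁ p.1 x) p.2)
    (hdiff₂ : ∀ p ∈ V, DifferentiableAt ℝ (fun t => v₂ t p.2) p.1 ∧
        DifferentiableAt ℝ (fun x => v₂ p.1 x) p.2)
    (hB₀ : ∀ p ∈ V, deriv (fun t => v₀ t p.2) p.1
        + deriv (fun x => (v₀ p.1 x) ^ 2) p.2 = 0)
    (hB₁ : ∀ p ∈ V, deriv (fun t => v₁ t p.2) p.1
        + deriv (fun x => (v₁ p.1 x) ^ 2) p.2 = 0)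
    (hB₂ : ∀ p ∈ V, deriv (fun t => v₂ t p.2) p.1
        + deriv (fun x => (v₂ p.1 x) ^ 2) p.2 = 0)
    (hBu : ∀ p ∈ V, deriv (fun t => v₀ t p.2 - v₁ t p.2 + v₂ t p.2) p.1
        + deriv (fun x => (v₀ p.1 x - v₁ p.1 x + v₂ p.1 x) ^ 2) p.2 = 0) :
    ∀ p ∈ V, deriv (fun x => (v₁ p.1 x - v₀ p.1 x) * (v₁ p.1 x - v₂ p.1 x)) p.2 = 0 := by
  intro p hp
  obtain ⟨ht₀, hx₀⟩ := hdiff₀ p hp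
  obtain ⟨ht₁, hx₁⟩ := hdiff₁ p hp
  obtain ⟨ht₂, hx₂⟩ := hdiff₂ p hp
  -- time derivative of u splits by linearity
  have hsplit : deriv (fun t => v₀ t p.2 - v₁ t p.2 + v₂ t p.2) p.1
      = deriv (fun t => v₀ t p.2) p.1 - deriv (fun t => v₁ t p.2) p.1
        + deriv (fun t => v₂ t p.2) p.1 := by
    rw [deriv_fun_add (ht₀.fun_sub ht₁) ht₂, deriv_fun_sub ht₀ ht₁]
  have h₀ := hB₀ p hp
  have h₁ := hB₁ p hp
  have h₂ := hB₂ p hp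
  have hu := hBu p hp
  rw [hsplit] at hu
  -- so ∂_x u² - ∂_x v₀² + ∂_x v₁² - ∂_x v₂² = 0
  have key : deriv (fun x => (v₀ p.1 x - v₁ p.1 x + v₂ p.1 x) ^ 2) p.2
      - deriv (fun x => (v₀ p.1 x) ^ 2) p.2
      + deriv (fun x => (v₁ p.1 x) ^ 2) p.2
      - deriv (fun x => (v₂ p.1 x) ^ 2) p.2 = 0 := by linarith
  have hfun : (fun x => (v₁ p.1 x - v₀ p.1 x) * (v₁ p.1 x - v₂ p.1 x))
      = fun x => ((v₀ p.1 x - v₁ p.1 x + v₂ p.1 x) ^ 2 - (v₀ p.1 x) ^ 2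
          + (v₁ p.1 x) ^ 2 - (v₂ p.1 x) ^ 2) / 2 := by
    funext x; ring
  have du : DifferentiableAt ℝ (fun x => (v₀ p.1 x - v₁ p.1 x + v₂ p.1 x) ^ 2) p.2 :=
    ((hx₀.sub hx₁).add hx₂).pow 2
  have d0 : DifferentiableAt ℝ (fun x => (v₀ p.1 x) ^ 2) p.2 := hx₀.pow 2
  have d1 : DifferentiableAt ℝ (fun x => (v₁ p.1 x) ^ 2) p.2 := hx₁.pow 2
  have d2 : DifferentiableAt ℝ (fun x => (v₂ p.1 x) ^ 2) p.2 := hx₂.pow 2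
  rw [hfun, deriv_div_const, deriv_fun_sub ((du.fun_sub d0).fun_add d1) d2,
    deriv_fun_add (du.fun_sub d0) d1, deriv_fun_sub du d0, key, zero_div]
end

section
/- Let a ∈ ℝ and let x ∈ ℂ with Im(x) > 0. Let f : (0,∞) → ℂ be measurable and square-integrable, and define h(ξ) := i ∫_ξ^∞ f(η) · exp( i a (η² − ξ²) + i x (η − ξ) ) dη for ξ > 0. Then h is square-integrable on (0,∞) and ∫_0^∞ |h(ξ)|² dξ ≤ (Im x)^{−2} ∫_0^∞ |f(η)|² dη. -/
open MeasureTheory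
open scoped ENNReal NNReal

private theorem ofReal_norm_eq_coe_nnnorm {E : Type*} [SeminormedAddCommGroup E] (a : E) :
    ENNReal.ofReal ‖a‖ = (‖a‖₊ : ℝ≥0∞) := ofReal_norm a

open Set Real in
private theorem aux_exp_int {b : ℝ} (hb : 0 < b) :
    ∫ t in Ioi (0:ℝ), Real.exp (-b * t) = b⁻¹ := by
  have hderiv : ∀ t ∈ Ici (0:ℝ), HasDerivAt (fun u => -Real.exp (-b*u) / b) (Real.exp (-b*t)) t := by
    intro t _
    have : HasDerivAt (fun u => -Real.exp (-b*u) / b) (-(Real.exp (-b*t) * (-b*1)) / b) t :=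
      (((hasDerivAt_id t).const_mul (-b)).exp.neg).div_const b
    convert this using 1
    field_simp
  have htend : Filter.Tendsto (fun t => -Real.exp (-b*t) / b) Filter.atTop (nhds (-0 / b)) := by
    refine Filter.Tendsto.div_const (Filter.Tendsto.neg ?_) _
    apply Real.tendsto_exp_atBot.comp
    exact Filter.tendsto_id.const_mul_atTop_of_neg (neg_neg_iff_pos.2 hb)
  have := integral_Ioi_of_hasDerivAt_of_tendsto' hderiv (exp_neg_integrableOn_Ioi 0 hb) htend
  simp only [neg_mul] at this ⊢
  rw [this]
  field_simp
  simp

open Set Measure in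
private theorem aux_exp_lint {b : ℝ} (hb : 0 < b) :
    ∫⁻ t in Ioi (0:ℝ), ENNReal.ofReal (Real.exp (-(b * t))) = ENNReal.ofReal b⁻¹ := by
  rw [← ofReal_integral_eq_lintegral_ofReal]
  · rw [show (fun t => Real.exp (-(b*t))) = fun t => Real.exp (-b*t) by simp [neg_mul],
      aux_exp_int hb]
  · simpa [neg_mul, IntegrableOn] using exp_neg_integrableOn_Ioi 0 hb
  · exact Filter.Eventually.of_forall fun t => (Real.exp_pos _).le

open Set Measure in
private theorem aux_exp_lint_Ioi {b : ℝ} (hb : 0 < b) (c : ℝ) :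
    ∫⁻ t in Ioi c, ENNReal.ofReal (Real.exp (-(b * (t - c)))) = ENNReal.ofReal b⁻¹ := by
  have := (measurePreserving_sub_right (volume : Measure ℝ) c).setLIntegral_comp_emb
    (MeasurableEquiv.subRight c).measurableEmbedding
    (fun u => ENNReal.ofReal (Real.exp (-(b * u)))) (Ioi c)
  rw [show (fun t => t - c) '' Ioi c = Ioi 0 by simpa using Set.image_sub_const_Ioi c c,
    aux_exp_lint hb] at this
  simpa using this

open Set Measure in
private theorem aux_exp_lint_Iio {b : ℝ} (hb : 0 < b) (c : ℝ) :
    ∫⁻ t in Iio c, ENNReal.ofReal (Real.exp (-(b * (c - t)))) = ENNReal.ofReal b⁻¹ := by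
  have := (measurePreserving_sub_left (volume : Measure ℝ) c).setLIntegral_comp_emb
    (MeasurableEquiv.subLeft c).measurableEmbedding
    (fun u => ENNReal.ofReal (Real.exp (-(b * u)))) (Iio c)
  rw [show (fun t => c - t) '' Iio c = Ioi 0 by simpa using Set.image_const_sub_Iio c c,
    aux_exp_lint hb] at this
  simpa using this

private theorem aux_norm_exp (a : ℝ) (x : ℂ) (ξ η : ℝ) :
    ‖Complex.exp (Complex.I * (a : ℂ) * ((η : ℂ) ^ 2 - (ξ : ℂ) ^ 2)
      + Complex.I * x * ((η : ℂ) - (ξ : ℂ)))‖ = Real.exp (-(x.im * (η - ξ))) := by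
  rw [Complex.norm_exp]
  congr 1
  simp [Complex.add_re, Complex.mul_re, Complex.mul_im, Complex.I_re, Complex.I_im,
    Complex.sub_re, Complex.sub_im, Complex.ofReal_re, Complex.ofReal_im, pow_two]

/-- The integral operator `f ↦ h`, with
`h(ξ) = i ∫_ξ^∞ f(η) e^{ia(η²−ξ²)+ix(η−ξ)} dη`, is bounded on `L²(0,∞)` with norm at
most `(Im x)⁻¹` when `Im x > 0`. -/
theorem integral_operator_L2_bound
    (a : ℝ) (x : ℂ) (hx : 0 < x.im)
    (f : ℝ → ℂ) (hf : Measurable f)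
    (hf2 : IntegrableOn (fun η => ‖f η‖ ^ 2) (Set.Ioi 0))
    (h : ℝ → ℂ)
    (hh : ∀ ξ : ℝ, 0 < ξ →
      h ξ = Complex.I * ∫ η in Set.Ioi ξ,
        f η * Complex.exp (Complex.I * (a : ℂ) * ((η : ℂ) ^ 2 - (ξ : ℂ) ^ 2)
          + Complex.I * x * ((η : ℂ) - (ξ : ℂ)))) :
    IntegrableOn (fun ξ => ‖h ξ‖ ^ 2) (Set.Ioi 0) ∧
    (∫ ξ in Set.Ioi (0 : ℝ), ‖h ξ‖ ^ 2)
      ≤ (x.im) ⁻¹ ^ 2 * ∫ η in Set.Ioi (0 : ℝ), ‖f η‖ ^ 2 := by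
  classical
  set b : ℝ := x.im with hbdef
  have hb : 0 < b := hx
  -- the complex kernel
  set F : ℝ → ℝ → ℂ := fun ξ η =>
      f η * Complex.exp (Complex.I * (a : ℂ) * ((η : ℂ) ^ 2 - (ξ : ℂ) ^ 2)
        + Complex.I * x * ((η : ℂ) - (ξ : ℂ))) with hFdef
  have hFnorm : ∀ ξ η : ℝ, ‖F ξ η‖ = ‖f η‖ * Real.exp (-(b * (η - ξ))) := by
    intro ξ η
    rw [hFdef]
    simp only [norm_mul, aux_norm_exp a x ξ η, hbdef]
  -- measurability of the kernel on the product space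
  have hFmeas : Measurable fun p : ℝ × ℝ => F p.1 p.2 := by
    apply (hf.comp measurable_snd).mul
    apply Complex.measurable_exp.comp
    fun_prop
  -- the truncated kernel
  set K : ℝ × ℝ → ℂ := fun p => if p.1 < p.2 then F p.1 p.2 else 0 with hKdef
  have hKmeas : Measurable K := by
    exact Measurable.ite (measurableSet_lt measurable_fst measurable_snd) hFmeas measurable_const
  -- h is a.e. strongly measurable on (0,∞)
  have hHeq : ∀ ξ : ℝ, 0 < ξ → h ξ = Complex.I * ∫ η, K (ξ, η) := by
    intro ξ hξ
    rw [hh ξ hξ]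
    congr 1
    rw [← integral_indicator measurableSet_Ioi]
    refine integral_congr_ae (Filter.Eventually.of_forall fun η => ?_)
    simp only [Set.indicator_apply, Set.mem_Ioi, hKdef, hFdef]
  have hmeas : AEStronglyMeasurable h (volume.restrict (Set.Ioi (0:ℝ))) := by
    have hSM : StronglyMeasurable fun ξ : ℝ => Complex.I * ∫ η, K (ξ, η) :=
      (hKmeas.stronglyMeasurable.integral_prod_right').const_mul _
    refine hSM.aestronglyMeasurable.congr ?_
    rw [Filter.EventuallyEq, ae_restrict_iff' measurableSet_Ioi]
    exact Filter.Eventually.of_forall fun ξ hξ => (hHeq ξ hξ).symm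
  -- the weighted square integral
  set Hc : ℝ → ℝ≥0∞ := fun ξ =>
    ∫⁻ η in Set.Ioi ξ, (‖f η‖₊ : ℝ≥0∞) ^ 2 * ENNReal.ofReal (Real.exp (-(b * (η - ξ)))) with hHcdef
  -- pointwise bound on h via Cauchy-Schwarz
  have hpoint : ∀ ξ : ℝ, 0 < ξ →
      (‖h ξ‖₊ : ℝ≥0∞) ^ 2 ≤ ENNReal.ofReal b⁻¹ * Hc ξ := by
    intro ξ hξ
    have h1 : (‖h ξ‖₊ : ℝ≥0∞) ≤
        ∫⁻ η in Set.Ioi ξ, (‖f η‖₊ : ℝ≥0∞) * ENNReal.ofReal (Real.exp (-(b * (η - ξ)))) := by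
      rw [hh ξ hξ]
      calc (‖Complex.I * ∫ η in Set.Ioi ξ, F ξ η‖₊ : ℝ≥0∞)
          = (‖∫ η in Set.Ioi ξ, F ξ η‖₊ : ℝ≥0∞) := by
            rw [nnnorm_mul]; simp
        _ ≤ ∫⁻ η in Set.Ioi ξ, (‖F ξ η‖₊ : ℝ≥0∞) := enorm_integral_le_lintegral_enorm _
        _ = _ := by
            refine lintegral_congr fun η => ?_
            rw [← ofReal_norm_eq_coe_nnnorm, ← ofReal_norm_eq_coe_nnnorm,
              hFnorm ξ η, ENNReal.ofReal_mul (norm_nonneg _)]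
    -- Cauchy-Schwarz
    have hCS : (∫⁻ η in Set.Ioi ξ, (‖f η‖₊ : ℝ≥0∞) * ENNReal.ofReal (Real.exp (-(b * (η - ξ)))))
        ≤ (ENNReal.ofReal b⁻¹) ^ (2⁻¹ : ℝ) * (Hc ξ) ^ (2⁻¹ : ℝ) := by
      set φ : ℝ → ℝ≥0∞ := fun η => ENNReal.ofReal (Real.exp (-(b/2 * (η - ξ)))) with hφdef
      set ψ : ℝ → ℝ≥0∞ := fun η => (‖f η‖₊ : ℝ≥0∞) * φ η with hψdef
      have hφmeas : Measurable φ := by fun_prop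
      have hψmeas : Measurable ψ := (hf.nnnorm.coe_nnreal_ennreal).mul hφmeas
      have hφsq : ∀ η, φ η * φ η = ENNReal.ofReal (Real.exp (-(b * (η - ξ)))) := by
        intro η
        rw [hφdef]
        rw [← ENNReal.ofReal_mul (Real.exp_pos _).le, ← Real.exp_add]
        congr 2
        ring
      have hpq : Real.HolderConjugate 2 2 := Real.HolderConjugate.two_two
      have := ENNReal.lintegral_mul_le_Lp_mul_Lq (volume.restrict (Set.Ioi ξ)) hpq
        hφmeas.aemeasurable hψmeas.aemeasurable
      calc (∫⁻ η in Set.Ioi ξ, (‖f η‖₊ : ℝ≥0∞) * ENNReal.ofReal (Real.exp (-(b * (η - ξ)))))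
          = ∫⁻ η in Set.Ioi ξ, (φ * ψ) η := by
            refine lintegral_congr fun η => ?_
            simp only [Pi.mul_apply, hψdef]
            rw [← mul_assoc, mul_comm (φ η), mul_assoc, hφsq η]
        _ ≤ (∫⁻ η in Set.Ioi ξ, φ η ^ (2:ℝ)) ^ (1/(2:ℝ)) *
            (∫⁻ η in Set.Ioi ξ, ψ η ^ (2:ℝ)) ^ (1/(2:ℝ)) := this
        _ = (ENNReal.ofReal b⁻¹) ^ (2⁻¹ : ℝ) * (Hc ξ) ^ (2⁻¹ : ℝ) := by
            rw [one_div]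
            congr 1
            · congr 1
              calc (∫⁻ η in Set.Ioi ξ, φ η ^ (2:ℝ))
                  = ∫⁻ η in Set.Ioi ξ, ENNReal.ofReal (Real.exp (-(b * (η - ξ)))) := by
                    refine lintegral_congr fun η => ?_
                    rw [show (2:ℝ) = ((2:ℕ):ℝ) by norm_num, ENNReal.rpow_natCast, sq, hφsq η]
                _ = ENNReal.ofReal b⁻¹ := aux_exp_lint_Ioi hb ξ
            · congr 1
              rw [hHcdef]
              refine lintegral_congr fun η => ?_
              rw [show (2:ℝ) = ((2:ℕ):ℝ) by norm_num, ENNReal.rpow_natCast]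
              calc ψ η ^ 2 = (‖f η‖₊ : ℝ≥0∞) ^ 2 * (φ η * φ η) := by
                    simp only [hψdef]; ring
                _ = _ := by rw [hφsq η]
    calc (‖h ξ‖₊ : ℝ≥0∞) ^ 2 ≤ ((ENNReal.ofReal b⁻¹) ^ (2⁻¹:ℝ) * (Hc ξ) ^ (2⁻¹:ℝ)) ^ 2 :=
          pow_le_pow_left' (h1.trans hCS) 2
      _ = ENNReal.ofReal b⁻¹ * Hc ξ := by
          rw [mul_pow, ← ENNReal.rpow_natCast (_ ^ (2⁻¹:ℝ)), ← ENNReal.rpow_natCast (_ ^ (2⁻¹:ℝ)),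
            ← ENNReal.rpow_mul, ← ENNReal.rpow_mul]
          norm_num
  -- the Fubini/Tonelli step
  set W : ℝ × ℝ → ℝ≥0∞ := fun p =>
    if p.1 < p.2 then (‖f p.2‖₊ : ℝ≥0∞) ^ 2 * ENNReal.ofReal (Real.exp (-(b * (p.2 - p.1)))) else 0
    with hWdef
  have hWmeas : Measurable W := by
    refine Measurable.ite (measurableSet_lt measurable_fst measurable_snd) ?_ measurable_const
    refine (((hf.comp measurable_snd).nnnorm.coe_nnreal_ennreal).pow_const 2).mul ?_
    fun_prop
  have hHcW : ∀ ξ : ℝ, Hc ξ = ∫⁻ η, W (ξ, η) := by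
    intro ξ
    simp only [hHcdef]
    rw [← lintegral_indicator measurableSet_Ioi]
    refine lintegral_congr fun η => ?_
    simp only [Set.indicator_apply, Set.mem_Ioi, hWdef]
  set If : ℝ≥0∞ := ∫⁻ η in Set.Ioi (0:ℝ), (‖f η‖₊ : ℝ≥0∞) ^ 2 with hIfdef
  have hIf_meas : Measurable fun η : ℝ => (‖f η‖₊ : ℝ≥0∞) ^ 2 := (hf.nnnorm.coe_nnreal_ennreal).pow_const 2
  have hswap : (∫⁻ ξ in Set.Ioi (0:ℝ), Hc ξ) ≤ ENNReal.ofReal b⁻¹ * If := by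
    calc (∫⁻ ξ in Set.Ioi (0:ℝ), Hc ξ)
        = ∫⁻ ξ in Set.Ioi (0:ℝ), ∫⁻ η, W (ξ, η) := lintegral_congr fun ξ => hHcW ξ
      _ = ∫⁻ η, ∫⁻ ξ in Set.Ioi (0:ℝ), W (ξ, η) := by
          apply lintegral_lintegral_swap
          exact hWmeas.aemeasurable
      _ ≤ ∫⁻ η, (Set.Ioi (0:ℝ)).indicator
            (fun η => (‖f η‖₊ : ℝ≥0∞) ^ 2 * ENNReal.ofReal b⁻¹) η := by
          refine lintegral_mono fun η => ?_
          by_cases hη : 0 < η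
          · calc (∫⁻ ξ in Set.Ioi (0:ℝ), W (ξ, η))
                ≤ ∫⁻ ξ, W (ξ, η) := setLIntegral_le_lintegral _ _
              _ = ∫⁻ ξ in Set.Iio η,
                    (‖f η‖₊ : ℝ≥0∞) ^ 2 * ENNReal.ofReal (Real.exp (-(b * (η - ξ)))) := by
                  rw [← lintegral_indicator measurableSet_Iio]
                  refine lintegral_congr fun ξ => ?_
                  simp only [Set.indicator_apply, Set.mem_Iio, hWdef]
              _ = (‖f η‖₊ : ℝ≥0∞) ^ 2 *
                    ∫⁻ ξ in Set.Iio η, ENNReal.ofReal (Real.exp (-(b * (η - ξ)))) := by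
                  rw [lintegral_const_mul]
                  fun_prop
              _ = (‖f η‖₊ : ℝ≥0∞) ^ 2 * ENNReal.ofReal b⁻¹ := by
                  rw [aux_exp_lint_Iio hb η]
              _ = _ := by rw [Set.indicator_of_mem (Set.mem_Ioi.2 hη)]
          · have : ∀ ξ ∈ Set.Ioi (0:ℝ), W (ξ, η) = 0 := by
              intro ξ hξ
              rw [hWdef]
              simp only
              rw [if_neg]
              push_neg at hη ⊢
              exact hη.trans (Set.mem_Ioi.1 hξ).le
            rw [setLIntegral_congr_fun_ae measurableSet_Ioi (Filter.Eventually.of_forall this)]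
            simp
      _ = ∫⁻ η in Set.Ioi (0:ℝ), (‖f η‖₊ : ℝ≥0∞) ^ 2 * ENNReal.ofReal b⁻¹ := by
          rw [← lintegral_indicator measurableSet_Ioi]
      _ = ENNReal.ofReal b⁻¹ * If := by
          rw [lintegral_mul_const _ hIf_meas, mul_comm, ← hIfdef]
  -- main lintegral bound
  have hmain : (∫⁻ ξ in Set.Ioi (0:ℝ), (‖h ξ‖₊ : ℝ≥0∞) ^ 2)
      ≤ ENNReal.ofReal b⁻¹ * (ENNReal.ofReal b⁻¹ * If) := by
    calc (∫⁻ ξ in Set.Ioi (0:ℝ), (‖h ξ‖₊ : ℝ≥0∞) ^ 2)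
        ≤ ∫⁻ ξ in Set.Ioi (0:ℝ), ENNReal.ofReal b⁻¹ * Hc ξ := by
          refine lintegral_mono_ae ?_
          rw [ae_restrict_iff' measurableSet_Ioi]
          exact Filter.Eventually.of_forall fun ξ hξ => hpoint ξ hξ
      _ = ENNReal.ofReal b⁻¹ * ∫⁻ ξ in Set.Ioi (0:ℝ), Hc ξ := by
          exact lintegral_const_mul' _ _ ENNReal.ofReal_ne_top
      _ ≤ ENNReal.ofReal b⁻¹ * (ENNReal.ofReal b⁻¹ * If) :=
          mul_le_mul_right hswap _
  -- identification of If
  have hIf_eq : If = ENNReal.ofReal (∫ η in Set.Ioi (0:ℝ), ‖f η‖ ^ 2) := by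
    rw [ofReal_integral_eq_lintegral_ofReal hf2
      (Filter.Eventually.of_forall fun η => sq_nonneg _)]
    refine (lintegral_congr fun η => ?_).symm
    rw [ENNReal.ofReal_pow (norm_nonneg _), ofReal_norm_eq_coe_nnnorm]
  have hIf_ne_top : If ≠ ⊤ := by rw [hIf_eq]; exact ENNReal.ofReal_ne_top
  have hfin : (∫⁻ ξ in Set.Ioi (0:ℝ), (‖h ξ‖₊ : ℝ≥0∞) ^ 2) ≠ ⊤ := by
    refine ne_top_of_le_ne_top ?_ hmain
    exact ENNReal.mul_ne_top ENNReal.ofReal_ne_top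
      (ENNReal.mul_ne_top ENNReal.ofReal_ne_top hIf_ne_top)
  -- integrability
  have hint : IntegrableOn (fun ξ => ‖h ξ‖ ^ 2) (Set.Ioi 0) := by
    refine ⟨(hmeas.norm.pow 2), ?_⟩
    show (∫⁻ ξ in Set.Ioi (0:ℝ), (‖(‖h ξ‖ ^ 2)‖₊ : ℝ≥0∞)) < ⊤
    calc (∫⁻ ξ in Set.Ioi (0:ℝ), (‖(‖h ξ‖ ^ 2)‖₊ : ℝ≥0∞))
        = ∫⁻ ξ in Set.Ioi (0:ℝ), (‖h ξ‖₊ : ℝ≥0∞) ^ 2 := by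
          refine lintegral_congr fun ξ => ?_
          rw [← ofReal_norm_eq_coe_nnnorm, norm_pow, norm_norm,
            ENNReal.ofReal_pow (norm_nonneg _), ofReal_norm_eq_coe_nnnorm]
      _ < ⊤ := hfin.lt_top
  refine ⟨hint, ?_⟩
  -- final inequality
  have hLeq : ENNReal.ofReal (∫ ξ in Set.Ioi (0:ℝ), ‖h ξ‖ ^ 2)
      = ∫⁻ ξ in Set.Ioi (0:ℝ), (‖h ξ‖₊ : ℝ≥0∞) ^ 2 := by
    rw [ofReal_integral_eq_lintegral_ofReal hint
      (Filter.Eventually.of_forall fun ξ => sq_nonneg _)]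
    refine lintegral_congr fun ξ => ?_
    rw [ENNReal.ofReal_pow (norm_nonneg _), ofReal_norm_eq_coe_nnnorm]
  have hle2 : ENNReal.ofReal (∫ ξ in Set.Ioi (0:ℝ), ‖h ξ‖ ^ 2)
      ≤ ENNReal.ofReal (b⁻¹ ^ 2 * ∫ η in Set.Ioi (0:ℝ), ‖f η‖ ^ 2) := by
    rw [hLeq]
    refine hmain.trans (le_of_eq ?_)
    rw [hIf_eq, ← mul_assoc, ← ENNReal.ofReal_mul (by positivity), ← ENNReal.ofReal_mul (by positivity)]
    congr 1
    ring
  have h0 : (0:ℝ) ≤ ∫ ξ in Set.Ioi (0:ℝ), ‖h ξ‖ ^ 2 :=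
    integral_nonneg fun ξ => sq_nonneg _
  have h0' : (0:ℝ) ≤ b⁻¹ ^ 2 * ∫ η in Set.Ioi (0:ℝ), ‖f η‖ ^ 2 := by
    have : (0:ℝ) ≤ ∫ η in Set.Ioi (0:ℝ), ‖f η‖ ^ 2 := integral_nonneg fun η => sq_nonneg _
    positivity
  exact (ENNReal.ofReal_le_ofReal_iff h0').1 hle2
end

section
/- Let N ≥ 1, let Q be a monic squarefree complex polynomial of degree 2N, let P be a complex polynomial of degree at most 2N − 1, and let t ∈ ℂ. Then the set of complex numbers x for which the polynomial R_x(y) = (y − x)·Q(y) + 2t·P(y) has a multiple root (i.e. is not squarefree) is finite. -/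
open Polynomial

/-- For `Q` monic squarefree of degree `2N`, `P` of degree `≤ 2N − 1`, and `t ∈ ℂ`, the
set of `x ∈ ℂ` for which `R_x(y) = (y − x)Q(y) + 2tP(y)` is not squarefree is finite. -/
theorem not_squarefree_set_finite (N : ℕ) (hN : 1 ≤ N)
    (Q P : Polynomial ℂ) (hQmonic : Q.Monic) (hQsf : Squarefree Q)
    (hQdeg : Q.natDegree = 2 * N) (hPdeg : P.degree ≤ (2 * N - 1 : ℕ))
    (t : ℂ) :
    {x : ℂ | ¬ Squarefree ((X - C x) * Q + C (2 * t) * P)}.Finite := by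
  set S : Polynomial ℂ :=
    Q ^ 2 + C (2 * t) * (derivative P * Q - P * derivative Q) with hS
  -- S is nonzero: its coefficient in degree 4N is 1
  have hQne : Q ≠ 0 := hQmonic.ne_zero
  have hQ'deg : (derivative Q).degree ≤ (2 * N - 1 : ℕ) := by
    have h1 : (derivative Q).natDegree ≤ 2 * N - 1 := by
      simpa [hQdeg] using Polynomial.natDegree_derivative_le Q
    exact Polynomial.degree_le_natDegree.trans (by exact_mod_cast h1)
  have hP'deg : (derivative P).degree ≤ (2 * N - 1 : ℕ) :=
    Polynomial.degree_derivative_le.trans hPdeg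
  have hQd : Q.degree ≤ ((2 * N : ℕ) : WithBot ℕ) := by
    rw [Polynomial.degree_eq_natDegree hQne, hQdeg]
  have hSne : S ≠ 0 := by
    have h1 : (Q ^ 2).coeff (4 * N) = 1 := by
      have hm : (Q ^ 2).Monic := hQmonic.pow 2
      have hdeg2 : (Q ^ 2).natDegree = 4 * N := by
        rw [Polynomial.natDegree_pow, hQdeg]; ring
      rw [← hdeg2]; exact hm.coeff_natDegree
    have h2 : (C (2 * t) * (derivative P * Q - P * derivative Q)).coeff (4 * N) = 0 := by
      apply Polynomial.coeff_eq_zero_of_degree_lt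
      have hb : ((2 * N - 1 : ℕ) : WithBot ℕ) + ((2 * N : ℕ) : WithBot ℕ) < ((4 * N : ℕ) : WithBot ℕ) := by
        rw [← Nat.cast_add, Nat.cast_lt]
        omega
      calc (C (2 * t) * (derivative P * Q - P * derivative Q)).degree
          ≤ (derivative P * Q - P * derivative Q).degree := by
            apply (Polynomial.degree_mul_le _ _).trans
            simpa using add_le_add (Polynomial.degree_C_le) (le_refl (derivative P * Q - P * derivative Q).degree)
        _ ≤ max (derivative P * Q).degree (P * derivative Q).degree :=
            Polynomial.degree_sub_le _ _
        _ < ((4 * N : ℕ) : WithBot ℕ) := by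
            apply max_lt
            · exact (Polynomial.degree_mul_le _ _).trans_lt
                ((add_le_add hP'deg hQd).trans_lt hb)
            · refine (Polynomial.degree_mul_le _ _).trans_lt ?_
              refine (add_le_add hPdeg hQ'deg).trans_lt ?_
              rw [← Nat.cast_add, Nat.cast_lt]
              omega
    intro h0
    have hc : S.coeff (4 * N) = 0 := by rw [h0]; simp
    rw [hS, Polynomial.coeff_add, h1, h2] at hc
    simp at hc
  have hfin : {y : ℂ | S.IsRoot y}.Finite := Polynomial.finite_setOf_isRoot hSne
  -- the map recovering x from a common root y
  set f : ℂ → ℂ := fun y => y + (if Q.eval y = 0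
      then 2 * t * (derivative P).eval y / (derivative Q).eval y
      else 2 * t * P.eval y / Q.eval y) with hf
  apply (hfin.image f).subset
  rintro x hx
  set R : Polynomial ℂ := (X - C x) * Q + C (2 * t) * P with hR
  -- R is nonzero
  have hRne : R ≠ 0 := by
    have h1 : ((X - C x) * Q).coeff (2 * N + 1) = 1 := by
      have hm : ((X - C x) * Q).Monic := (monic_X_sub_C x).mul hQmonic
      have : ((X - C x) * Q).natDegree = 2 * N + 1 := by
        rw [Polynomial.natDegree_mul (Polynomial.X_sub_C_ne_zero x) hQne,
          Polynomial.natDegree_X_sub_C, hQdeg]; ring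
      rw [← this]; exact hm
    have h2 : (C (2 * t) * P).coeff (2 * N + 1) = 0 := by
      apply Polynomial.coeff_eq_zero_of_degree_lt
      refine (Polynomial.degree_mul_le _ _).trans_lt ?_
      have : (C (2 * t)).degree + P.degree ≤ P.degree := by
        simpa using add_le_add (Polynomial.degree_C_le) (le_refl P.degree)
      refine (this.trans hPdeg).trans_lt ?_
      exact_mod_cast (by omega : 2 * N - 1 < 2 * N + 1)
    intro h0
    have : R.coeff (2 * N + 1) = 0 := by rw [h0]; simp
    rw [hR, Polynomial.coeff_add, h1, h2] at this
    simp at this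
  -- get a common root y of R and R'
  rw [Set.mem_setOf_eq, Squarefree] at hx
  push_neg at hx
  obtain ⟨p, hpd, hpu⟩ := hx
  have hpne : p ≠ 0 := by rintro rfl; rw [zero_mul] at hpd; exact hRne (zero_dvd_iff.mp hpd)
  have hpdeg : 0 < p.degree := by
    rcases lt_or_ge 0 p.degree with h | h
    · exact h
    · exact absurd (Polynomial.isUnit_iff_degree_eq_zero.mpr
        (le_antisymm h (Polynomial.zero_le_degree_iff.mpr hpne))) hpu
  obtain ⟨y, hy⟩ := Complex.exists_root hpdeg
  have hXy : (X - C y) ∣ p := Polynomial.dvd_iff_isRoot.mpr hy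
  obtain ⟨g, hg⟩ : (X - C y) ^ 2 ∣ R := by
    obtain ⟨a, ha⟩ := hXy
    exact dvd_trans ⟨a * a, by rw [ha]; ring⟩ hpd
  have e0 : R.eval y = 0 := by rw [hg]; simp
  have e0' : (derivative R).eval y = 0 := by
    rw [hg]
    simp [Polynomial.derivative_mul, Polynomial.derivative_pow]
  -- translate into equations
  have e1 : (y - x) * Q.eval y + 2 * t * P.eval y = 0 := by
    have := e0
    simp only [hR, eval_add, eval_mul, eval_sub, eval_X, eval_C] at this
    linear_combination this
  have e2 : Q.eval y + (y - x) * (derivative Q).eval y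
      + 2 * t * (derivative P).eval y = 0 := by
    have := e0'
    simp only [hR, derivative_add, derivative_mul, derivative_sub, derivative_X,
      derivative_C, Polynomial.derivative_C, eval_add, eval_mul, eval_sub, eval_X,
      eval_C, zero_mul, mul_zero, zero_add, add_zero, one_mul, zero_sub, sub_zero] at this
    linear_combination this
  have hSy : S.IsRoot y := by
    show S.eval y = 0
    simp only [hS, eval_add, eval_mul, eval_sub, eval_pow, eval_C]
    linear_combination Q.eval y * e2 - (derivative Q).eval y * e1
  refine ⟨y, hSy, ?_⟩
  by_cases hQy : Q.eval y = 0
  · have hQ'y : (derivative Q).eval y ≠ 0 := by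
      intro hQ'y
      have hsep : Q.Separable := PerfectField.separable_iff_squarefree.mpr hQsf
      obtain ⟨a, b, hab⟩ := hsep
      have := congrArg (Polynomial.eval y) hab
      simp [hQy, hQ'y] at this
    rw [hf]
    simp only [if_pos hQy]
    rw [hQy] at e2
    field_simp
    linear_combination e2
  · rw [hf]
    simp only [if_neg hQy]
    field_simp
    linear_combination e1
end
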